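/- arXiv:1903.06311 — 5 statements merged into one kernel-verified Lean document; each statement's English description precedes it below -/
import Mathlib

section
/- Any conditional probability distribution P(x,y|s,t) that admits a decomposition P(x,y|s,t) = Σ_λ P(x|s,λ) P(y|t,λ) P(λ), where all conditional distributions have finitely many values of λ, admits a decomposition of the same form in which each P(x|s,λ) and P(y|t,λ) takes values only in {0,1} (i.e., is deterministic). Equivalently, every classically-realizable bipartite common-cause box is a convex combination of products of deterministic local response functions (Fine's theorem). -/
open Finset

private lemma fine_sum_prod_one {S X : Type*} [Fintype S] [Fintype X] [DecidableEq S]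
    (h : X → S → ℝ) (hs : ∀ s, ∑ x, h x s = 1) :
    ∑ f : S → X, ∏ s, h (f s) s = 1 := by
  have key := Finset.prod_univ_sum (fun _ : S => (univ : Finset X)) (fun s x => h x s)
  rw [Fintype.piFinset_univ] at key
  rw [← key]
  simp [hs]

private lemma fine_sum_ind_prod {S X : Type*} [Fintype S] [Fintype X] [DecidableEq S]
    [DecidableEq X] (h : X → S → ℝ) (hs : ∀ s, ∑ x, h x s = 1) (x : X) (s : S) :
    ∑ f : S → X, (if f s = x then (1:ℝ) else 0) * ∏ s', h (f s') s' = h x s := by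
  have key : ∀ f : S → X, (if f s = x then (1:ℝ) else 0) * ∏ s', h (f s') s'
      = ∏ s', (if s' = s then (if f s' = x then h (f s') s' else 0) else h (f s') s') := by
    intro f
    by_cases hf : f s = x
    · rw [if_pos hf, one_mul]
      refine Finset.prod_congr rfl fun s' _ => ?_
      by_cases h1 : s' = s
      · subst h1; rw [if_pos rfl, if_pos hf]
      · rw [if_neg h1]
    · rw [if_neg hf, zero_mul]
      symm
      apply Finset.prod_eq_zero (Finset.mem_univ s)
      rw [if_pos rfl, if_neg hf]
  simp_rw [key]
  have key2 := Finset.prod_univ_sum (fun _ : S => (univ : Finset X))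
      (fun s' v => if s' = s then (if v = x then h v s' else 0) else h v s')
  rw [Fintype.piFinset_univ] at key2
  rw [← key2]
  rw [Finset.prod_eq_single s]
  · simp
  · intro s' _ hne
    simp [hne, hs]
  · simp

private lemma fine_calc {Λ α β : Type*} [Fintype Λ] [Fintype α] [Fintype β]
    (p : Λ → ℝ) (F : α → Λ → ℝ) (G : β → Λ → ℝ) :
    ∑ m : Λ × α × β, p m.1 * (F m.2.1 m.1 * G m.2.2 m.1)
      = ∑ l, p l * ((∑ f, F f l) * (∑ g, G g l)) := by
  rw [Fintype.sum_prod_type]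
  refine Finset.sum_congr rfl fun l _ => ?_
  rw [Fintype.sum_prod_type, Finset.sum_mul_sum, Finset.mul_sum]
  simp_rw [Finset.mul_sum]

/-- Fine's theorem: any classically-realizable bipartite common-cause box admits a
decomposition into products of deterministic local response functions. -/
theorem stmt_1 {X Y S T Λ : Type*} [Fintype X] [Fintype Y] [Fintype S] [Fintype T] [Fintype Λ]
    (p : Λ → ℝ) (hp : ∀ l, 0 ≤ p l) (hps : ∑ l, p l = 1)
    (pA : X → S → Λ → ℝ) (hpA : ∀ x s l, 0 ≤ pA x s l) (hpA1 : ∀ s l, ∑ x, pA x s l = 1)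
    (pB : Y → T → Λ → ℝ) (hpB : ∀ y t l, 0 ≤ pB y t l) (hpB1 : ∀ t l, ∑ y, pB y t l = 1)
    (P : X → Y → S → T → ℝ)
    (hP : ∀ x y s t, P x y s t = ∑ l, pA x s l * pB y t l * p l) :
    ∃ (n : ℕ) (q : Fin n → ℝ) (qA : X → S → Fin n → ℝ) (qB : Y → T → Fin n → ℝ),
      (∀ m, 0 ≤ q m) ∧ (∑ m, q m = 1) ∧
      (∀ x s m, qA x s m = 0 ∨ qA x s m = 1) ∧ (∀ s m, ∑ x, qA x s m = 1) ∧
      (∀ y t m, qB y t m = 0 ∨ qB y t m = 1) ∧ (∀ t m, ∑ y, qB y t m = 1) ∧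
      (∀ x y s t, P x y s t = ∑ m, qA x s m * qB y t m * q m) := by
  classical
  set M := Λ × (S → X) × (T → Y) with hM
  let Q : M → ℝ := fun m =>
    p m.1 * ((∏ s, pA (m.2.1 s) s m.1) * ∏ t, pB (m.2.2 t) t m.1)
  let e := Fintype.equivFin M
  refine ⟨Fintype.card M,
    fun i => Q (e.symm i),
    fun x s i => if (e.symm i).2.1 s = x then 1 else 0,
    fun y t i => if (e.symm i).2.2 t = y then 1 else 0,
    ?_, ?_, ?_, ?_, ?_, ?_, ?_⟩
  · intro i
    exact mul_nonneg (hp _) (mul_nonneg (Finset.prod_nonneg fun s _ => hpA _ _ _)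
      (Finset.prod_nonneg fun t _ => hpB _ _ _))
  · rw [Fintype.sum_equiv e.symm _ Q (fun _ => rfl)]
    have := fine_calc (α := S → X) (β := T → Y) p
      (fun f l => ∏ s, pA (f s) s l) (fun g l => ∏ t, pB (g t) t l)
    rw [show (∑ m : M, Q m) = _ from this]
    simp_rw [fine_sum_prod_one (fun x s => pA x s _) (fun s => hpA1 s _),
      fine_sum_prod_one (fun y t => pB y t _) (fun t => hpB1 t _)]
    simpa using hps
  · intro x s i
    by_cases h : (e.symm i).2.1 s = x <;> simp [h]
  · intro s i; simp
  · intro y t i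
    by_cases h : (e.symm i).2.2 t = y <;> simp [h]
  · intro t i; simp
  · intro x y s t
    rw [Fintype.sum_equiv e.symm _
      (fun m : M => (if m.2.1 s = x then (1:ℝ) else 0) * (if m.2.2 t = y then (1:ℝ) else 0) * Q m)
      (fun _ => rfl)]
    have key : ∀ m : M,
        (if m.2.1 s = x then (1:ℝ) else 0) * (if m.2.2 t = y then (1:ℝ) else 0) * Q m
        = p m.1 * (((if m.2.1 s = x then (1:ℝ) else 0) * ∏ s', pA (m.2.1 s') s' m.1)
            * ((if m.2.2 t = y then (1:ℝ) else 0) * ∏ t', pB (m.2.2 t') t' m.1)) := by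
      intro m; simp only [Q]; ring
    simp_rw [key]
    rw [fine_calc (α := S → X) (β := T → Y) p (fun f l => (if f s = x then (1:ℝ) else 0) * ∏ s', pA (f s') s' l)
      (fun g l => (if g t = y then (1:ℝ) else 0) * ∏ t', pB (g t') t' l)]
    simp_rw [fine_sum_ind_prod (fun x s => pA x s _) (fun s => hpA1 s _) x s,
      fine_sum_ind_prod (fun y t => pB y t _) (fun t => hpB1 t _) y t]
    rw [hP]
    exact Finset.sum_congr rfl fun l _ => by ring
end

section
/- For the CHSH type (two binary settings and two binary outcomes per wing), any nonfree box R violates exactly one of the eight CHSH inequalities: there is a unique k ∈ {0,…,7} such that CHSH_k(R) > 2, where CHSH_k are the eight sign-variants of the CHSH functional (those with an odd number of minus signs among the four correlator coefficients). -/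
open Finset

noncomputable section

/-- A CHSH-type box: `R x y s t = P(x,y|s,t)`. -/
abbrev Box : Type := Fin 2 → Fin 2 → Fin 2 → Fin 2 → ℝ

def sgn : Fin 2 → ℝ := fun a => if a = 0 then 1 else -1

/-- The two-point correlator `⟨A_s B_t⟩`. -/
def corr (R : Box) (s t : Fin 2) : ℝ := ∑ x, ∑ y, sgn x * sgn y * R x y s t

/-- `R` is a (no-signalling, normalized) box. -/
def IsBox (R : Box) : Prop :=
  (∀ x y s t, 0 ≤ R x y s t) ∧ (∀ s t, ∑ x, ∑ y, R x y s t = 1) ∧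
  (∀ x s t t', ∑ y, R x y s t = ∑ y, R x y s t') ∧
  (∀ y t s s', ∑ x, R x y s t = ∑ x, R x y s' t)

/-- `R` is free (local): a classical common-cause box. -/
def IsFree (R : Box) : Prop :=
  ∃ (n : ℕ) (p : Fin n → ℝ) (qA qB : Fin n → Fin 2 → Fin 2 → ℝ),
    (∀ i, 0 ≤ p i) ∧ (∑ i, p i = 1) ∧
    (∀ i x s, 0 ≤ qA i x s) ∧ (∀ i s, ∑ x, qA i x s = 1) ∧
    (∀ i y t, 0 ≤ qB i y t) ∧ (∀ i t, ∑ y, qB i y t = 1) ∧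
    ∀ x y s t, R x y s t = ∑ i, p i * qA i x s * qB i y t

/-- A sign pattern `σ ∈ {±1}^4` with an odd number of `-1` entries. -/
def IsSignPattern (σ : Fin 2 → Fin 2 → ℝ) : Prop :=
  (∀ s t, σ s t = 1 ∨ σ s t = -1) ∧ σ 0 0 * σ 1 0 * σ 0 1 * σ 1 1 = -1

/-- The CHSH functional with sign pattern `σ`. -/
def CHSHk (σ : Fin 2 → Fin 2 → ℝ) (R : Box) : ℝ := ∑ s, ∑ t, σ s t * corr R s t

/-! ### Auxiliary constructions (Fine's theorem) -/

def Ll (R : Box) (t b : Fin 2) : ℝ := max 0 (R 0 b 0 t - R 1 b 1 t)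
def Uu (R : Box) (t b : Fin 2) : ℝ := min (R 0 b 0 t) (R 0 b 1 t)
def Zz (R : Box) : ℝ := max (Ll R 0 0 + Ll R 0 1) (Ll R 1 0 + Ll R 1 1)
def zz (R : Box) (t b : Fin 2) : ℝ :=
  if b = 0 then min (Uu R t 0) (Zz R - Ll R t 1)
  else Zz R - min (Uu R t 0) (Zz R - Ll R t 1)
def Tt (R : Box) (t a0 a1 b : Fin 2) : ℝ :=
  if a0 = 0 then (if a1 = 0 then zz R t b else R 0 b 0 t - zz R t b)
  else (if a1 = 0 then R 0 b 1 t - zz R t b else R 1 b 1 t - R 0 b 0 t + zz R t b)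
def Mm (R : Box) (a0 a1 : Fin 2) : ℝ := Tt R 0 a0 a1 0 + Tt R 0 a0 a1 1
def qq (R : Box) (a0 a1 b0 b1 : Fin 2) : ℝ :=
  if Mm R a0 a1 = 0 then 0 else Tt R 0 a0 a1 b0 * Tt R 1 a0 a1 b1 / Mm R a0 a1

abbrev JJ : Type := (Fin 2 × Fin 2) × Fin 2 × Fin 2
def eJ : JJ ≃ Fin (Fintype.card JJ) := Fintype.equivFin JJ
def wt (R : Box) (j : JJ) : ℝ := qq R j.1.1 j.1.2 j.2.1 j.2.2
def dA (j : JJ) (x s : Fin 2) : ℝ := if (if s = 0 then j.1.1 else j.1.2) = x then 1 else 0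
def dB (j : JJ) (y t : Fin 2) : ℝ := if (if t = 0 then j.2.1 else j.2.2) = y then 1 else 0

lemma dA_nonneg (j : JJ) (x s : Fin 2) : 0 ≤ dA j x s := by
  unfold dA; split_ifs <;> norm_num

lemma dB_nonneg (j : JJ) (y t : Fin 2) : 0 ≤ dB j y t := by
  unfold dB; split_ifs <;> norm_num

lemma dA_sum (j : JJ) (s : Fin 2) : ∑ x, dA j x s = 1 := by
  obtain ⟨⟨a0, a1⟩, b0, b1⟩ := j
  fin_cases s
  · fin_cases a0 <;> simp [dA, Fin.sum_univ_two]
  · fin_cases a1 <;> simp [dA, Fin.sum_univ_two]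

lemma dB_sum (j : JJ) (t : Fin 2) : ∑ y, dB j y t = 1 := by
  obtain ⟨⟨a0, a1⟩, b0, b1⟩ := j
  fin_cases t
  · fin_cases b0 <;> simp [dB, Fin.sum_univ_two]
  · fin_cases b1 <;> simp [dB, Fin.sum_univ_two]

set_option maxHeartbeats 1000000 in
theorem free_of_chsh (R : Box) (hR : IsBox R)
    (hch : ∀ σ, IsSignPattern σ → CHSHk σ R ≤ 2) : IsFree R := by
  obtain ⟨hpos, hnorm, hAns, hBns⟩ := hR
  have hcorr : ∀ s t, corr R s t = R 0 0 s t - R 0 1 s t - R 1 0 s t + R 1 1 s t := by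
    intro s t; simp [corr, sgn, Fin.sum_univ_two]; ring
  have hn : ∀ s t, R 0 0 s t + R 0 1 s t + R 1 0 s t + R 1 1 s t = 1 := by
    intro s t; have := hnorm s t; simp [Fin.sum_univ_two] at this; linarith
  have ha : ∀ x s, R x 0 s 0 + R x 1 s 0 = R x 0 s 1 + R x 1 s 1 := by
    intro x s; have := hAns x s 0 1; simpa [Fin.sum_univ_two] using this
  have hb : ∀ y t, R 0 y 0 t + R 1 y 0 t = R 0 y 1 t + R 1 y 1 t := by
    intro y t; have := hBns y t 0 1; simpa [Fin.sum_univ_two] using this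
  have master : ∀ c00 c01 c10 c11 : ℝ,
      (c00 = 1 ∨ c00 = -1) → (c01 = 1 ∨ c01 = -1) → (c10 = 1 ∨ c10 = -1) →
      (c11 = 1 ∨ c11 = -1) → c00 * c10 * c01 * c11 = -1 →
      c00 * corr R 0 0 + c01 * corr R 0 1 + c10 * corr R 1 0 + c11 * corr R 1 1 ≤ 2 := by
    intro c00 c01 c10 c11 h1 h2 h3 h4 h5
    have key := hch (fun s t => if s = 0 then (if t = 0 then c00 else c01)
        else (if t = 0 then c10 else c11))
      ⟨by
        intro s t
        fin_cases s <;> fin_cases t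
        · simpa using h1
        · simpa using h2
        · simpa using h3
        · simpa using h4, by simpa using h5⟩
    simp only [CHSHk, Fin.sum_univ_two] at key
    norm_num at key
    linarith
  have k1 := master 1 1 1 (-1) (by norm_num) (by norm_num) (by norm_num) (by norm_num) (by norm_num)
  have k2 := master 1 1 (-1) 1 (by norm_num) (by norm_num) (by norm_num) (by norm_num) (by norm_num)
  have k3 := master 1 (-1) 1 1 (by norm_num) (by norm_num) (by norm_num) (by norm_num) (by norm_num)
  have k4 := master (-1) 1 1 1 (by norm_num) (by norm_num) (by norm_num) (by norm_num) (by norm_num)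
  have k5 := master (-1) (-1) (-1) 1 (by norm_num) (by norm_num) (by norm_num) (by norm_num) (by norm_num)
  have k6 := master (-1) (-1) 1 (-1) (by norm_num) (by norm_num) (by norm_num) (by norm_num) (by norm_num)
  have k7 := master (-1) 1 (-1) (-1) (by norm_num) (by norm_num) (by norm_num) (by norm_num) (by norm_num)
  have k8 := master 1 (-1) (-1) (-1) (by norm_num) (by norm_num) (by norm_num) (by norm_num) (by norm_num)
  rw [hcorr 0 0, hcorr 0 1, hcorr 1 0, hcorr 1 1] at k1 k2 k3 k4 k5 k6 k7 k8
  -- pointwise L ≤ U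
  have hLU : ∀ t b, Ll R t b ≤ Uu R t b := by
    intro t b
    refine max_le (le_min (hpos 0 b 0 t) (hpos 0 b 1 t))
      (le_min (by linarith [hpos 1 b 1 t]) (by linarith [hb b t, hpos 1 b 0 t]))
  -- the two cross inequalities (these need CHSH)
  have h01 : Ll R 0 0 + Ll R 0 1 ≤ Uu R 1 0 + Uu R 1 1 := by
    simp only [Ll, Uu, max_def, min_def]
    split_ifs <;>
      linarith [k1, k2, k3, k4, k5, k6, k7, k8, hn 0 0, hn 0 1, hn 1 0, hn 1 1,
        ha 0 0, ha 0 1, ha 1 0, ha 1 1, hb 0 0, hb 0 1, hb 1 0, hb 1 1,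
        hpos 0 0 0 0, hpos 0 1 0 0, hpos 1 0 0 0, hpos 1 1 0 0,
        hpos 0 0 0 1, hpos 0 1 0 1, hpos 1 0 0 1, hpos 1 1 0 1,
        hpos 0 0 1 0, hpos 0 1 1 0, hpos 1 0 1 0, hpos 1 1 1 0,
        hpos 0 0 1 1, hpos 0 1 1 1, hpos 1 0 1 1, hpos 1 1 1 1]
  have h10 : Ll R 1 0 + Ll R 1 1 ≤ Uu R 0 0 + Uu R 0 1 := by
    simp only [Ll, Uu, max_def, min_def]
    split_ifs <;>
      linarith [k1, k2, k3, k4, k5, k6, k7, k8, hn 0 0, hn 0 1, hn 1 0, hn 1 1,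
        ha 0 0, ha 0 1, ha 1 0, ha 1 1, hb 0 0, hb 0 1, hb 1 0, hb 1 1,
        hpos 0 0 0 0, hpos 0 1 0 0, hpos 1 0 0 0, hpos 1 1 0 0,
        hpos 0 0 0 1, hpos 0 1 0 1, hpos 1 0 0 1, hpos 1 1 0 1,
        hpos 0 0 1 0, hpos 0 1 1 0, hpos 1 0 1 0, hpos 1 1 1 0,
        hpos 0 0 1 1, hpos 0 1 1 1, hpos 1 0 1 1, hpos 1 1 1 1]
  have hZL : ∀ t, Ll R t 0 + Ll R t 1 ≤ Zz R := by
    intro t; fin_cases t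
    · exact le_max_left _ _
    · exact le_max_right _ _
  have hZU : ∀ t, Zz R ≤ Uu R t 0 + Uu R t 1 := by
    intro t; fin_cases t
    · exact max_le (add_le_add (hLU 0 0) (hLU 0 1)) h10
    · exact max_le h01 (add_le_add (hLU 1 0) (hLU 1 1))
  have hz1 : ∀ t b, Ll R t b ≤ zz R t b := by
    intro t b; fin_cases b
    · show Ll R t 0 ≤ zz R t 0
      rw [show zz R t 0 = min (Uu R t 0) (Zz R - Ll R t 1) from if_pos rfl]
      exact le_min (hLU t 0) (by linarith [hZL t])
    · show Ll R t 1 ≤ zz R t 1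
      rw [show zz R t 1 = Zz R - min (Uu R t 0) (Zz R - Ll R t 1) from if_neg (by decide)]
      linarith [min_le_right (Uu R t 0) (Zz R - Ll R t 1), hZL t]
  have hz2 : ∀ t b, zz R t b ≤ Uu R t b := by
    intro t b; fin_cases b
    · show zz R t 0 ≤ Uu R t 0
      rw [show zz R t 0 = min (Uu R t 0) (Zz R - Ll R t 1) from if_pos rfl]
      exact min_le_left _ _
    · show zz R t 1 ≤ Uu R t 1
      rw [show zz R t 1 = Zz R - min (Uu R t 0) (Zz R - Ll R t 1) from if_neg (by decide)]
      have := le_min (show Zz R - Uu R t 1 ≤ Uu R t 0 by linarith [hZU t])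
        (show Zz R - Uu R t 1 ≤ Zz R - Ll R t 1 by linarith [hLU t 1])
      linarith
  have hL0 : ∀ t b, (0:ℝ) ≤ Ll R t b := fun t b => le_max_left _ _
  have hLlb : ∀ t b, R 0 b 0 t - R 1 b 1 t ≤ Ll R t b := fun t b => le_max_right _ _
  have hU1 : ∀ t b, Uu R t b ≤ R 0 b 0 t := fun t b => min_le_left _ _
  have hU2 : ∀ t b, Uu R t b ≤ R 0 b 1 t := fun t b => min_le_right _ _
  have hT : ∀ t a0 a1 b, 0 ≤ Tt R t a0 a1 b := by
    intro t a0 a1 b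
    fin_cases a0 <;> fin_cases a1 <;> simp only [Tt] <;> norm_num <;>
      linarith [hz1 t b, hz2 t b, hL0 t b, hLlb t b, hU1 t b, hU2 t b]
  have hM0 : ∀ a0 a1, 0 ≤ Mm R a0 a1 := by
    intro a0 a1
    have := hT 0 a0 a1 0; have := hT 0 a0 a1 1
    show (0:ℝ) ≤ Tt R 0 a0 a1 0 + Tt R 0 a0 a1 1
    linarith
  have hM1 : ∀ a0 a1, Tt R 1 a0 a1 0 + Tt R 1 a0 a1 1 = Mm R a0 a1 := by
    intro a0 a1
    fin_cases a0 <;> fin_cases a1 <;> simp only [Mm, Tt, zz] <;> norm_num <;>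
      linarith [ha 0 0, ha 0 1, ha 1 0, ha 1 1]
  have hrow : ∀ t a0 b, Tt R t a0 0 b + Tt R t a0 1 b = R a0 b 0 t := by
    intro t a0 b
    fin_cases a0 <;> simp only [Tt] <;> norm_num <;> linarith [hb b t]
  have hcol : ∀ t a1 b, Tt R t 0 a1 b + Tt R t 1 a1 b = R a1 b 1 t := by
    intro t a1 b
    fin_cases a1 <;> simp only [Tt] <;> norm_num <;> linarith
  have hq0 : ∀ a0 a1 b0 b1, 0 ≤ qq R a0 a1 b0 b1 := by
    intro a0 a1 b0 b1
    rw [qq]; split_ifs with h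
    · exact le_refl 0
    · have hMpos : 0 < Mm R a0 a1 := lt_of_le_of_ne (hM0 a0 a1) (Ne.symm h)
      exact div_nonneg (mul_nonneg (hT 0 a0 a1 b0) (hT 1 a0 a1 b1)) hMpos.le
  have hqb1 : ∀ a0 a1 b0, qq R a0 a1 b0 0 + qq R a0 a1 b0 1 = Tt R 0 a0 a1 b0 := by
    intro a0 a1 b0
    by_cases h : Mm R a0 a1 = 0
    · have hMe : Tt R 0 a0 a1 0 + Tt R 0 a0 a1 1 = 0 := h
      simp only [qq, if_pos h]
      have h0 := hT 0 a0 a1 0; have h1 := hT 0 a0 a1 1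
      fin_cases b0 <;> norm_num <;> linarith
    · simp only [qq, if_neg h]
      rw [← add_div, ← mul_add, hM1 a0 a1]
      exact mul_div_cancel_right₀ _ h
  have hqb0 : ∀ a0 a1 b1, qq R a0 a1 0 b1 + qq R a0 a1 1 b1 = Tt R 1 a0 a1 b1 := by
    intro a0 a1 b1
    by_cases h : Mm R a0 a1 = 0
    · have hMe : Tt R 0 a0 a1 0 + Tt R 0 a0 a1 1 = 0 := h
      simp only [qq, if_pos h]
      have h0 := hT 1 a0 a1 0; have h1 := hT 1 a0 a1 1
      have := hM1 a0 a1
      fin_cases b1 <;> norm_num <;> linarith [h ▸ this]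
    · simp only [qq, if_neg h]
      rw [← add_div, ← add_mul,
        show Tt R 0 a0 a1 0 + Tt R 0 a0 a1 1 = Mm R a0 a1 from rfl]
      exact mul_div_cancel_left₀ _ h
  -- assemble the decomposition
  refine ⟨Fintype.card JJ, fun i => wt R (eJ.symm i), fun i x s => dA (eJ.symm i) x s,
    fun i y t => dB (eJ.symm i) y t, fun i => hq0 _ _ _ _, ?_, fun i x s => dA_nonneg _ _ _,
    fun i s => dA_sum _ _, fun i y t => dB_nonneg _ _ _, fun i t => dB_sum _ _, ?_⟩
  · have hs : (∑ i, wt R (eJ.symm i)) = ∑ j, wt R j := Equiv.sum_comp eJ.symm _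
    rw [hs]
    simp only [Fintype.sum_prod_type, Fin.sum_univ_two, wt]
    linarith [hqb1 0 0 0, hqb1 0 0 1, hqb1 0 1 0, hqb1 0 1 1,
      hqb1 1 0 0, hqb1 1 0 1, hqb1 1 1 0, hqb1 1 1 1,
      hrow 0 0 0, hrow 0 0 1, hrow 0 1 0, hrow 0 1 1, hn 0 0]
  · intro x y s t
    have hs : (∑ i, wt R (eJ.symm i) * dA (eJ.symm i) x s * dB (eJ.symm i) y t)
        = ∑ j, wt R j * dA j x s * dB j y t :=
      Equiv.sum_comp eJ.symm (fun j => wt R j * dA j x s * dB j y t)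
    rw [hs]
    fin_cases s <;> fin_cases t <;> fin_cases x <;> fin_cases y <;>
      simp only [Fintype.sum_prod_type, Fin.sum_univ_two, wt, dA, dB] <;> norm_num <;>
      linarith [hqb1 0 0 0, hqb1 0 0 1, hqb1 0 1 0, hqb1 0 1 1,
        hqb1 1 0 0, hqb1 1 0 1, hqb1 1 1 0, hqb1 1 1 1,
        hqb0 0 0 0, hqb0 0 0 1, hqb0 0 1 0, hqb0 0 1 1,
        hqb0 1 0 0, hqb0 1 0 1, hqb0 1 1 0, hqb0 1 1 1,
        hrow 0 0 0, hrow 0 0 1, hrow 0 1 0, hrow 0 1 1,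
        hrow 1 0 0, hrow 1 0 1, hrow 1 1 0, hrow 1 1 1,
        hcol 0 0 0, hcol 0 0 1, hcol 0 1 0, hcol 0 1 1,
        hcol 1 0 0, hcol 1 0 1, hcol 1 1 0, hcol 1 1 1]

theorem chsh_unique (R : Box) (hR : IsBox R) :
    ∀ σ1 σ2, IsSignPattern σ1 → 2 < CHSHk σ1 R → IsSignPattern σ2 → 2 < CHSHk σ2 R → σ1 = σ2 := by
  obtain ⟨hpos, hnorm, _, _⟩ := hR
  have hcorr : ∀ s t, corr R s t = R 0 0 s t - R 0 1 s t - R 1 0 s t + R 1 1 s t := by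
    intro s t; simp [corr, sgn, Fin.sum_univ_two]; ring
  have hn : ∀ s t, R 0 0 s t + R 0 1 s t + R 1 0 s t + R 1 1 s t = 1 := by
    intro s t; have := hnorm s t; simp [Fin.sum_univ_two] at this; linarith
  have hcu : ∀ s t, corr R s t ≤ 1 := by
    intro s t; rw [hcorr]
    linarith [hpos 0 0 s t, hpos 0 1 s t, hpos 1 0 s t, hpos 1 1 s t, hn s t]
  have hcl : ∀ s t, -1 ≤ corr R s t := by
    intro s t; rw [hcorr]
    linarith [hpos 0 0 s t, hpos 0 1 s t, hpos 1 0 s t, hpos 1 1 s t, hn s t]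
  intro σ1 σ2 p1 v1 p2 v2
  have h4 : σ1 0 0 = σ2 0 0 → σ1 0 1 = σ2 0 1 → σ1 1 0 = σ2 1 0 → σ1 1 1 = σ2 1 1 → σ1 = σ2 := by
    intro e1 e2 e3 e4
    funext s t
    fin_cases s <;> fin_cases t <;> assumption
  have e1 : CHSHk σ1 R = σ1 0 0 * corr R 0 0 + σ1 0 1 * corr R 0 1
      + σ1 1 0 * corr R 1 0 + σ1 1 1 * corr R 1 1 := by
    simp only [CHSHk, Fin.sum_univ_two]; ring
  have e2 : CHSHk σ2 R = σ2 0 0 * corr R 0 0 + σ2 0 1 * corr R 0 1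
      + σ2 1 0 * corr R 1 0 + σ2 1 1 * corr R 1 1 := by
    simp only [CHSHk, Fin.sum_univ_two]; ring
  have q1 := p1.2
  have q2 := p2.2
  rcases p1.1 0 0 with ha1|ha1 <;> rcases p1.1 0 1 with hb1|hb1 <;>
    rcases p1.1 1 0 with hc1|hc1 <;> rcases p1.1 1 1 with hd1|hd1 <;>
    rw [ha1, hb1, hc1, hd1] at q1 <;> norm_num at q1 <;>
    rcases p2.1 0 0 with ha2|ha2 <;> rcases p2.1 0 1 with hb2|hb2 <;>
    rcases p2.1 1 0 with hc2|hc2 <;> rcases p2.1 1 1 with hd2|hd2 <;>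
    rw [ha2, hb2, hc2, hd2] at q2 <;> norm_num at q2 <;>
    rw [ha1, hb1, hc1, hd1] at e1 <;> rw [ha2, hb2, hc2, hd2] at e2 <;>
    first
      | exact h4 (ha1.trans ha2.symm) (hb1.trans hb2.symm) (hc1.trans hc2.symm) (hd1.trans hd2.symm)
      | linarith [v1, v2, e1, e2, hcu 0 0, hcu 0 1, hcu 1 0, hcu 1 1,
          hcl 0 0, hcl 0 1, hcl 1 0, hcl 1 1]

/-- A nonfree CHSH-type box violates exactly one of the eight CHSH inequalities. -/
theorem stmt_7 (R : Box) (hR : IsBox R) (hnf : ¬ IsFree R) :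
    ∃! σ : Fin 2 → Fin 2 → ℝ, IsSignPattern σ ∧ 2 < CHSHk σ R := by
  have hex : ∃ σ, IsSignPattern σ ∧ 2 < CHSHk σ R := by
    by_contra hno
    push_neg at hno
    exact hnf (free_of_chsh R hR hno)
  obtain ⟨σ0, hp0, hv0⟩ := hex
  exact ⟨σ0, ⟨hp0, hv0⟩, fun σ' h' => chsh_unique R hR σ' σ0 h'.1 h'.2 hp0 hv0⟩

end
end

section
/- Every CHSH-type box R satisfying CHSH(R) ≥ 2 admits a convex decomposition R = λ·R_PR + (1−λ)·L, where R_PR is the canonical PR box, L is a free (local) box saturating the CHSH inequality (CHSH(L) = 2), and λ = (CHSH(R) − 2)/2. -/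
open Finset

noncomputable section

/-- The canonical CHSH functional. -/
def CHSH (R : Box) : ℝ := corr R 0 0 + corr R 1 0 + corr R 0 1 - corr R 1 1

/-- The canonical PR box: `P(x,y|s,t) = 1/2` if `x ⊕ y = s·t`, else `0`. -/
def PRbox : Box := fun x y s t => if x + y = s * t then 1/2 else 0


lemma interval_glue (l h : Fin 2 → Fin 2 → ℝ)
    (hlh : ∀ s a, l s a ≤ h s a)
    (c0 : l 0 0 + l 0 1 ≤ h 1 0 + h 1 1) (c1 : l 1 0 + l 1 1 ≤ h 0 0 + h 0 1) :
    ∃ θ : Fin 2 → Fin 2 → ℝ, (∀ s a, l s a ≤ θ s a ∧ θ s a ≤ h s a) ∧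
      θ 0 0 + θ 0 1 = θ 1 0 + θ 1 1 := by
  set β := max (l 0 0 + l 0 1) (l 1 0 + l 1 1) with hβ
  have hb0 : l 0 0 + l 0 1 ≤ β := le_max_left _ _
  have hb1 : l 1 0 + l 1 1 ≤ β := le_max_right _ _
  have hu0 : β ≤ h 0 0 + h 0 1 := max_le (by have := hlh 0 0; have := hlh 0 1; linarith) c1
  have hu1 : β ≤ h 1 0 + h 1 1 := max_le c0 (by have := hlh 1 0; have := hlh 1 1; linarith)
  refine ⟨fun s a => if s = 0 then
      (if a = 0 then min (h 0 0) (β - l 0 1) else β - min (h 0 0) (β - l 0 1))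
    else
      (if a = 0 then min (h 1 0) (β - l 1 1) else β - min (h 1 0) (β - l 1 1)), ?_, by norm_num⟩
  intro s a
  fin_cases s <;> fin_cases a <;>
    norm_num <;>
    constructor <;>
    rcases min_cases (h 0 0) (β - l 0 1) with h' | h' <;>
    rcases min_cases (h 1 0) (β - l 1 1) with h'' | h'' <;>
    linarith [hlh 0 0, hlh 0 1, hlh 1 0, hlh 1 1, h'.1, h''.1, h'.2, h''.2]


set_option maxHeartbeats 1000000 in
lemma dummy_unused : True := trivial

lemma fin2cases (c : Fin 2) : c = 0 ∨ c = 1 := by fin_cases c <;> simp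

def pk (a b c d : Fin 2) : Fin 16 := ⟨a.val + 2*b.val + 4*c.val + 8*d.val, by omega⟩

lemma sum_fin16 {M : Type*} [AddCommMonoid M] (f : Fin 16 → M) :
    ∑ i, f i = ∑ a : Fin 2, ∑ b : Fin 2, ∑ c : Fin 2, ∑ d : Fin 2, f (pk a b c d) := by
  have h : ∑ p : Fin 2 × Fin 2 × Fin 2 × Fin 2, f (pk p.1 p.2.1 p.2.2.1 p.2.2.2) = ∑ i, f i :=
    Fintype.sum_bijective (fun p : Fin 2 × Fin 2 × Fin 2 × Fin 2 =>
      pk p.1 p.2.1 p.2.2.1 p.2.2.2) (by decide) _ _ (fun p => rfl)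
  rw [← h, Fintype.sum_prod_type]
  simp only [Fintype.sum_prod_type]

def bitf (m : ℕ) (i : Fin 16) : Fin 2 := ⟨i.val / m % 2, Nat.mod_lt _ (by norm_num)⟩

set_option maxHeartbeats 2000000 in
lemma fine (L : Box) (hL : IsBox L) (hC : CHSH L = 2) : IsFree L := by
  obtain ⟨hpos, hnorm, hA, hB⟩ := hL
  have p0000 := hpos 0 0 0 0
  have p0001 := hpos 0 0 0 1
  have p0010 := hpos 0 0 1 0
  have p0011 := hpos 0 0 1 1
  have p0100 := hpos 0 1 0 0
  have p0101 := hpos 0 1 0 1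
  have p0110 := hpos 0 1 1 0
  have p0111 := hpos 0 1 1 1
  have p1000 := hpos 1 0 0 0
  have p1001 := hpos 1 0 0 1
  have p1010 := hpos 1 0 1 0
  have p1011 := hpos 1 0 1 1
  have p1100 := hpos 1 1 0 0
  have p1101 := hpos 1 1 0 1
  have p1110 := hpos 1 1 1 0
  have p1111 := hpos 1 1 1 1
  have n00 := hnorm 0 0; have n01 := hnorm 0 1; have n10 := hnorm 1 0; have n11 := hnorm 1 1
  simp only [Fin.sum_univ_two] at n00 n01 n10 n11
  have a000 := hA 0 0 0 1; have a100 := hA 1 0 0 1; have a010 := hA 0 1 0 1; have a110 := hA 1 1 0 1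
  simp only [Fin.sum_univ_two] at a000 a100 a010 a110
  have b000 := hB 0 0 0 1; have b100 := hB 1 0 0 1; have b010 := hB 0 1 0 1; have b110 := hB 1 1 0 1
  simp only [Fin.sum_univ_two] at b000 b100 b010 b110
  simp only [CHSH, corr, sgn, Fin.sum_univ_two] at hC
  norm_num at hC
  -- feasibility via interval_glue
  obtain ⟨θ, hθ, hθsum⟩ := interval_glue
    (fun s a => max 0 (L a 0 s 1 - L a 1 s 0))
    (fun s a => min (L a 0 s 0) (L a 0 s 1))
    (by
      intro s a
      fin_cases s <;> fin_cases a <;> simp only [Fin.mk_zero, Fin.mk_one]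
      · rcases max_cases (0:ℝ) (L 0 0 0 1 - L 0 1 0 0) with hm | hm <;>
          rcases min_cases (L 0 0 0 0) (L 0 0 0 1) with hn | hn <;>
          linarith [hm.1, hn.1, hm.2, hn.2]
      · rcases max_cases (0:ℝ) (L 1 0 0 1 - L 1 1 0 0) with hm | hm <;>
          rcases min_cases (L 1 0 0 0) (L 1 0 0 1) with hn | hn <;>
          linarith [hm.1, hn.1, hm.2, hn.2]
      · rcases max_cases (0:ℝ) (L 0 0 1 1 - L 0 1 1 0) with hm | hm <;>
          rcases min_cases (L 0 0 1 0) (L 0 0 1 1) with hn | hn <;>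
          linarith [hm.1, hn.1, hm.2, hn.2]
      · rcases max_cases (0:ℝ) (L 1 0 1 1 - L 1 1 1 0) with hm | hm <;>
          rcases min_cases (L 1 0 1 0) (L 1 0 1 1) with hn | hn <;>
          linarith [hm.1, hn.1, hm.2, hn.2])
    (by
      rcases max_cases (0:ℝ) (L 0 0 0 1 - L 0 1 0 0) with hm | hm <;>
      rcases max_cases (0:ℝ) (L 1 0 0 1 - L 1 1 0 0) with hm2 | hm2 <;>
      rcases min_cases (L 0 0 1 0) (L 0 0 1 1) with hn3 | hn3 <;>
      rcases min_cases (L 1 0 1 0) (L 1 0 1 1) with hn4 | hn4 <;>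
      linarith [hm.1, hm2.1, hn3.1, hn4.1])
    (by
      rcases max_cases (0:ℝ) (L 0 0 1 1 - L 0 1 1 0) with hm3 | hm3 <;>
      rcases max_cases (0:ℝ) (L 1 0 1 1 - L 1 1 1 0) with hm4 | hm4 <;>
      rcases min_cases (L 0 0 0 0) (L 0 0 0 1) with hn1 | hn1 <;>
      rcases min_cases (L 1 0 0 0) (L 1 0 0 1) with hn2 | hn2 <;>
      linarith [hm3.1, hm4.1, hn1.1, hn2.1])
  -- unpack θ bounds into linear facts
  have t00l := (hθ 0 0).1; have t00u := (hθ 0 0).2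
  have t01l := (hθ 0 1).1; have t01u := (hθ 0 1).2
  have t10l := (hθ 1 0).1; have t10u := (hθ 1 0).2
  have t11l := (hθ 1 1).1; have t11u := (hθ 1 1).2
  simp only [max_le_iff, le_min_iff] at t00l t01l t10l t11l t00u t01u t10u t11u
  obtain ⟨t00l1, t00l2⟩ := t00l; obtain ⟨t00u1, t00u2⟩ := t00u
  obtain ⟨t01l1, t01l2⟩ := t01l; obtain ⟨t01u1, t01u2⟩ := t01u
  obtain ⟨t10l1, t10l2⟩ := t10l; obtain ⟨t10u1, t10u2⟩ := t10u
  obtain ⟨t11l1, t11l2⟩ := t11l; obtain ⟨t11u1, t11u2⟩ := t11u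
  clear hθ
  -- the triple distributions
  set T : Fin 2 → Fin 2 → Fin 2 → Fin 2 → ℝ := fun s a j k =>
    if j = 0 then (if k = 0 then θ s a else L a 0 s 0 - θ s a)
    else (if k = 0 then L a 0 s 1 - θ s a else L a 1 s 0 - L a 0 s 1 + θ s a) with hTdef
  have hTpos : ∀ s a j k, 0 ≤ T s a j k := by
    intro s a j k
    fin_cases s <;> fin_cases a <;> fin_cases j <;> fin_cases k <;>
      simp only [hTdef] <;> norm_num <;> linarith
  have hPb' : ∀ j k, T 0 0 j k + T 0 1 j k = T 1 0 j k + T 1 1 j k := by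
    intro j k
    fin_cases j <;> fin_cases k <;> simp only [hTdef] <;> norm_num <;> linarith
  have hTMj : ∀ s a j, T s a j 0 + T s a j 1 = L a j s 0 := by
    intro s a j
    fin_cases s <;> fin_cases a <;> fin_cases j <;> simp only [hTdef] <;> norm_num <;> linarith
  have hTMk : ∀ s a k, T s a 0 k + T s a 1 k = L a k s 1 := by
    intro s a k
    fin_cases s <;> fin_cases a <;> fin_cases k <;> simp only [hTdef] <;> norm_num <;> linarith
  clear hTdef
  clear_value T
  set Pb : Fin 2 → Fin 2 → ℝ := fun j k => T 0 0 j k + T 0 1 j k with hPbdef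
  have hPbpos : ∀ j k, 0 ≤ Pb j k := fun j k => by
    have := hTpos 0 0 j k; have := hTpos 0 1 j k; simp only [hPbdef]; linarith
  have hTle : ∀ s a j k, T s a j k ≤ Pb j k := by
    intro s a j k
    have h1 := hTpos 0 0 j k; have h2 := hTpos 0 1 j k
    have h3 := hTpos 1 0 j k; have h4 := hTpos 1 1 j k
    have h5 := hPb' j k
    fin_cases s <;> fin_cases a <;> simp only [Fin.mk_zero, Fin.mk_one, hPbdef] <;> linarith
  set q : Fin 2 → Fin 2 → Fin 2 → Fin 2 → ℝ := fun a0 a1 j k =>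
    if Pb j k = 0 then 0 else T 0 a0 j k * T 1 a1 j k / Pb j k with hqdef
  have hqpos : ∀ a0 a1 j k, 0 ≤ q a0 a1 j k := by
    intro a0 a1 j k
    simp only [hqdef]
    split
    · exact le_refl 0
    · exact div_nonneg (mul_nonneg (hTpos 0 a0 j k) (hTpos 1 a1 j k)) (hPbpos j k)
  have hS1 : ∀ a0 j k, q a0 0 j k + q a0 1 j k = T 0 a0 j k := by
    intro a0 j k
    simp only [hqdef]
    by_cases hp : Pb j k = 0
    · rw [if_pos hp, if_pos hp]
      have h1 := hTle 0 a0 j k; have h2 := hTpos 0 a0 j k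
      rw [hp] at h1; linarith
    · rw [if_neg hp, if_neg hp, ← add_div, ← mul_add]
      have hps : T 1 0 j k + T 1 1 j k = Pb j k := (hPb' j k).symm
      rw [hps]
      exact mul_div_cancel_right₀ _ hp
  have hS2 : ∀ a1 j k, q 0 a1 j k + q 1 a1 j k = T 1 a1 j k := by
    intro a1 j k
    simp only [hqdef]
    by_cases hp : Pb j k = 0
    · rw [if_pos hp, if_pos hp]
      have h1 := hTle 1 a1 j k; have h2 := hTpos 1 a1 j k
      rw [hp] at h1; linarith
    · rw [if_neg hp, if_neg hp, ← add_div, ← add_mul]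
      have hps : T 0 0 j k + T 0 1 j k = Pb j k := rfl
      rw [hps, mul_comm]
      exact mul_div_cancel_right₀ _ hp
  clear_value q
  clear hqdef hPbdef
  
  have hb1 : ∀ a b c d : Fin 2, bitf 1 (pk a b c d) = a := by decide
  have hb2 : ∀ a b c d : Fin 2, bitf 2 (pk a b c d) = b := by decide
  have hb4 : ∀ a b c d : Fin 2, bitf 4 (pk a b c d) = c := by decide
  have hb8 : ∀ a b c d : Fin 2, bitf 8 (pk a b c d) = d := by decide
  refine ⟨16, fun i => q (bitf 1 i) (bitf 2 i) (bitf 4 i) (bitf 8 i),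
    fun i x s => if x = (if s = 0 then bitf 1 i else bitf 2 i) then 1 else 0,
    fun i y t => if y = (if t = 0 then bitf 4 i else bitf 8 i) then 1 else 0,
    fun i => hqpos _ _ _ _, ?_, ?_, ?_, ?_, ?_, ?_⟩
  · rw [sum_fin16]
    simp only [Fin.sum_univ_two, hb1, hb2, hb4, hb8]
    linarith [hS1 0 0 0, hS1 0 0 1, hS1 0 1 0, hS1 0 1 1, hS1 1 0 0, hS1 1 0 1, hS1 1 1 0, hS1 1 1 1, hTMj 0 0 0, hTMj 0 0 1, hTMj 0 1 0, hTMj 0 1 1, hTMj 1 0 0, hTMj 1 0 1, hTMj 1 1 0, hTMj 1 1 1]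
  · intro i x s
    by_cases h : x = (if s = 0 then bitf 1 i else bitf 2 i) <;> simp [h]
  · intro i s
    simp only [Fin.sum_univ_two]
    rcases fin2cases (if s = 0 then bitf 1 i else bitf 2 i) with h | h <;> rw [h] <;> norm_num
  · intro i y t
    by_cases h : y = (if t = 0 then bitf 4 i else bitf 8 i) <;> simp [h]
  · intro i t
    simp only [Fin.sum_univ_two]
    rcases fin2cases (if t = 0 then bitf 4 i else bitf 8 i) with h | h <;> rw [h] <;> norm_num
  · intro x y s t
    rw [sum_fin16]
    simp only [Fin.sum_univ_two, hb1, hb2, hb4, hb8]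
    fin_cases x <;> fin_cases y <;> fin_cases s <;> fin_cases t <;>
      norm_num <;>
      linarith [hS1 0 0 0, hS1 0 0 1, hS1 0 1 0, hS1 0 1 1, hS1 1 0 0, hS1 1 0 1, hS1 1 1 0, hS1 1 1 1, hS2 0 0 0, hS2 0 0 1, hS2 0 1 0, hS2 0 1 1, hS2 1 0 0, hS2 1 0 1, hS2 1 1 0, hS2 1 1 1, hTMj 0 0 0, hTMj 0 0 1, hTMj 0 1 0, hTMj 0 1 1, hTMj 1 0 0, hTMj 1 0 1, hTMj 1 1 0, hTMj 1 1 1, hTMk 0 0 0, hTMk 0 0 1, hTMk 0 1 0, hTMk 0 1 1, hTMk 1 0 0, hTMk 1 0 1, hTMk 1 1 0, hTMk 1 1 1]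


set_option maxHeartbeats 2000000 in
/-- Every CHSH-type box with `CHSH(R) ≥ 2` decomposes as `λ·R_PR + (1−λ)·L` with `L`
free and CHSH-saturating, where `λ = (CHSH(R) − 2)/2`. -/
theorem stmt_8 (R : Box) (hR : IsBox R) (hchsh : 2 ≤ CHSH R) :
    ∃ L : Box, IsFree L ∧ CHSH L = 2 ∧
      ∀ x y s t, R x y s t =
        ((CHSH R - 2) / 2) * PRbox x y s t + (1 - (CHSH R - 2) / 2) * L x y s t := by
  obtain ⟨hpos, hnorm, hA, hB⟩ := hR
  have p0000 := hpos 0 0 0 0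
  have p0001 := hpos 0 0 0 1
  have p0010 := hpos 0 0 1 0
  have p0011 := hpos 0 0 1 1
  have p0100 := hpos 0 1 0 0
  have p0101 := hpos 0 1 0 1
  have p0110 := hpos 0 1 1 0
  have p0111 := hpos 0 1 1 1
  have p1000 := hpos 1 0 0 0
  have p1001 := hpos 1 0 0 1
  have p1010 := hpos 1 0 1 0
  have p1011 := hpos 1 0 1 1
  have p1100 := hpos 1 1 0 0
  have p1101 := hpos 1 1 0 1
  have p1110 := hpos 1 1 1 0
  have p1111 := hpos 1 1 1 1
  have n00 := hnorm 0 0; have n01 := hnorm 0 1; have n10 := hnorm 1 0; have n11 := hnorm 1 1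
  simp only [Fin.sum_univ_two] at n00 n01 n10 n11
  have a000 := hA 0 0 0 1; have a100 := hA 1 0 0 1; have a010 := hA 0 1 0 1; have a110 := hA 1 1 0 1
  simp only [Fin.sum_univ_two] at a000 a100 a010 a110
  have b000 := hB 0 0 0 1; have b100 := hB 1 0 0 1; have b010 := hB 0 1 0 1; have b110 := hB 1 1 0 1
  simp only [Fin.sum_univ_two] at b000 b100 b010 b110
  have pr0000 : PRbox 0 0 0 0 = 1/2 := by simp only [PRbox]; rw [if_pos (by decide)]
  have pr0001 : PRbox 0 0 0 1 = 1/2 := by simp only [PRbox]; rw [if_pos (by decide)]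
  have pr0010 : PRbox 0 0 1 0 = 1/2 := by simp only [PRbox]; rw [if_pos (by decide)]
  have pr0011 : PRbox 0 0 1 1 = 0 := by simp only [PRbox]; rw [if_neg (by decide)]
  have pr0100 : PRbox 0 1 0 0 = 0 := by simp only [PRbox]; rw [if_neg (by decide)]
  have pr0101 : PRbox 0 1 0 1 = 0 := by simp only [PRbox]; rw [if_neg (by decide)]
  have pr0110 : PRbox 0 1 1 0 = 0 := by simp only [PRbox]; rw [if_neg (by decide)]
  have pr0111 : PRbox 0 1 1 1 = 1/2 := by simp only [PRbox]; rw [if_pos (by decide)]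
  have pr1000 : PRbox 1 0 0 0 = 0 := by simp only [PRbox]; rw [if_neg (by decide)]
  have pr1001 : PRbox 1 0 0 1 = 0 := by simp only [PRbox]; rw [if_neg (by decide)]
  have pr1010 : PRbox 1 0 1 0 = 0 := by simp only [PRbox]; rw [if_neg (by decide)]
  have pr1011 : PRbox 1 0 1 1 = 1/2 := by simp only [PRbox]; rw [if_pos (by decide)]
  have pr1100 : PRbox 1 1 0 0 = 1/2 := by simp only [PRbox]; rw [if_pos (by decide)]
  have pr1101 : PRbox 1 1 0 1 = 1/2 := by simp only [PRbox]; rw [if_pos (by decide)]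
  have pr1110 : PRbox 1 1 1 0 = 1/2 := by simp only [PRbox]; rw [if_pos (by decide)]
  have pr1111 : PRbox 1 1 1 1 = 0 := by simp only [PRbox]; rw [if_neg (by decide)]
  have hPRmA : ∀ x s t : Fin 2, PRbox x 0 s t + PRbox x 1 s t = 1/2 := by
    intro x s t
    fin_cases x <;> fin_cases s <;> fin_cases t <;>
      simp only [Fin.mk_zero, Fin.mk_one, pr0000, pr0001, pr0010, pr0011, pr0100, pr0101, pr0110, pr0111, pr1000, pr1001, pr1010, pr1011, pr1100, pr1101, pr1110, pr1111] <;> norm_num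
  have hPRmB : ∀ y s t : Fin 2, PRbox 0 y s t + PRbox 1 y s t = 1/2 := by
    intro y s t
    fin_cases y <;> fin_cases s <;> fin_cases t <;>
      simp only [Fin.mk_zero, Fin.mk_one, pr0000, pr0001, pr0010, pr0011, pr0100, pr0101, pr0110, pr0111, pr1000, pr1001, pr1010, pr1011, pr1100, pr1101, pr1110, pr1111] <;> norm_num
  have hc : CHSH R =
      R 0 0 0 0 - R 0 1 0 0 - R 1 0 0 0 + R 1 1 0 0
      + (R 0 0 1 0 - R 0 1 1 0 - R 1 0 1 0 + R 1 1 1 0)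
      + (R 0 0 0 1 - R 0 1 0 1 - R 1 0 0 1 + R 1 1 0 1)
      - (R 0 0 1 1 - R 0 1 1 1 - R 1 0 1 1 + R 1 1 1 1) := by
    simp only [CHSH, corr, sgn, Fin.sum_univ_two]
    norm_num
    ring
  have hle4 : CHSH R ≤ 4 := by rw [hc]; linarith
  by_cases h4 : CHSH R = 4
  · -- R is the PR box itself
    refine ⟨fun x y s t => (if x = 0 then (1:ℝ) else 0) * (if y = 0 then 1 else 0),
      ⟨1, fun _ => 1, fun _ x s => if x = 0 then 1 else 0, fun _ y t => if y = 0 then 1 else 0,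
        fun _ => zero_le_one, by simp, ?_, ?_, ?_, ?_, ?_⟩, ?_, ?_⟩
    · intro i x s; dsimp only; split <;> norm_num
    · intro i s; simp [Fin.sum_univ_two]
    · intro i y t; dsimp only; split <;> norm_num
    · intro i t; simp [Fin.sum_univ_two]
    · intro x y s t; simp
    · simp only [CHSH, corr, sgn, Fin.sum_univ_two]; norm_num
    · intro x y s t
      rw [h4] at hc ⊢
      norm_num
      fin_cases x <;> fin_cases y <;> fin_cases s <;> fin_cases t <;>
        simp only [Fin.mk_zero, Fin.mk_one, pr0000, pr0001, pr0010, pr0011, pr0100, pr0101, pr0110, pr0111, pr1000, pr1001, pr1010, pr1011, pr1100, pr1101, pr1110, pr1111] <;>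
        norm_num <;> linarith
  · have hlt4 : CHSH R < 4 := lt_of_le_of_ne hle4 h4
    set lam : ℝ := (CHSH R - 2) / 2 with hlam
    have hlam0 : 0 ≤ lam := by rw [hlam]; linarith
    have hlam1 : lam < 1 := by rw [hlam]; linarith
    have hne : (1:ℝ) - lam ≠ 0 := by intro hcon; linarith
    have hpos1 : (0:ℝ) < 1 - lam := by linarith
    set L : Box := fun x y s t => (R x y s t - lam * PRbox x y s t) / (1 - lam) with hLdef
    have m0000 : (1 - lam) * L 0 0 0 0 = R 0 0 0 0 - lam * (1/2) := by
      rw [hLdef]; simp only [pr0000]; rw [mul_comm, div_mul_cancel₀ _ hne]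
    have m0001 : (1 - lam) * L 0 0 0 1 = R 0 0 0 1 - lam * (1/2) := by
      rw [hLdef]; simp only [pr0001]; rw [mul_comm, div_mul_cancel₀ _ hne]
    have m0010 : (1 - lam) * L 0 0 1 0 = R 0 0 1 0 - lam * (1/2) := by
      rw [hLdef]; simp only [pr0010]; rw [mul_comm, div_mul_cancel₀ _ hne]
    have m0011 : (1 - lam) * L 0 0 1 1 = R 0 0 1 1 - lam * (0) := by
      rw [hLdef]; simp only [pr0011]; rw [mul_comm, div_mul_cancel₀ _ hne]
    have m0100 : (1 - lam) * L 0 1 0 0 = R 0 1 0 0 - lam * (0) := by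
      rw [hLdef]; simp only [pr0100]; rw [mul_comm, div_mul_cancel₀ _ hne]
    have m0101 : (1 - lam) * L 0 1 0 1 = R 0 1 0 1 - lam * (0) := by
      rw [hLdef]; simp only [pr0101]; rw [mul_comm, div_mul_cancel₀ _ hne]
    have m0110 : (1 - lam) * L 0 1 1 0 = R 0 1 1 0 - lam * (0) := by
      rw [hLdef]; simp only [pr0110]; rw [mul_comm, div_mul_cancel₀ _ hne]
    have m0111 : (1 - lam) * L 0 1 1 1 = R 0 1 1 1 - lam * (1/2) := by
      rw [hLdef]; simp only [pr0111]; rw [mul_comm, div_mul_cancel₀ _ hne]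
    have m1000 : (1 - lam) * L 1 0 0 0 = R 1 0 0 0 - lam * (0) := by
      rw [hLdef]; simp only [pr1000]; rw [mul_comm, div_mul_cancel₀ _ hne]
    have m1001 : (1 - lam) * L 1 0 0 1 = R 1 0 0 1 - lam * (0) := by
      rw [hLdef]; simp only [pr1001]; rw [mul_comm, div_mul_cancel₀ _ hne]
    have m1010 : (1 - lam) * L 1 0 1 0 = R 1 0 1 0 - lam * (0) := by
      rw [hLdef]; simp only [pr1010]; rw [mul_comm, div_mul_cancel₀ _ hne]
    have m1011 : (1 - lam) * L 1 0 1 1 = R 1 0 1 1 - lam * (1/2) := by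
      rw [hLdef]; simp only [pr1011]; rw [mul_comm, div_mul_cancel₀ _ hne]
    have m1100 : (1 - lam) * L 1 1 0 0 = R 1 1 0 0 - lam * (1/2) := by
      rw [hLdef]; simp only [pr1100]; rw [mul_comm, div_mul_cancel₀ _ hne]
    have m1101 : (1 - lam) * L 1 1 0 1 = R 1 1 0 1 - lam * (1/2) := by
      rw [hLdef]; simp only [pr1101]; rw [mul_comm, div_mul_cancel₀ _ hne]
    have m1110 : (1 - lam) * L 1 1 1 0 = R 1 1 1 0 - lam * (1/2) := by
      rw [hLdef]; simp only [pr1110]; rw [mul_comm, div_mul_cancel₀ _ hne]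
    have m1111 : (1 - lam) * L 1 1 1 1 = R 1 1 1 1 - lam * (0) := by
      rw [hLdef]; simp only [pr1111]; rw [mul_comm, div_mul_cancel₀ _ hne]
    have hLbox : IsBox L := by
      refine ⟨?_, ?_, ?_, ?_⟩
      · intro x y s t
        rw [hLdef]
        apply div_nonneg _ (le_of_lt hpos1)
        fin_cases x <;> fin_cases y <;> fin_cases s <;> fin_cases t <;>
          simp only [Fin.mk_zero, Fin.mk_one, pr0000, pr0001, pr0010, pr0011, pr0100, pr0101, pr0110, pr0111, pr1000, pr1001, pr1010, pr1011, pr1100, pr1101, pr1110, pr1111] <;>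
          rw [hlam] <;> rw [hc] at hchsh ⊢ <;> linarith
      · intro s t
        have hni := hnorm s t
        simp only [Fin.sum_univ_two] at hni ⊢
        have hpr : PRbox 0 0 s t + PRbox 0 1 s t + (PRbox 1 0 s t + PRbox 1 1 s t) = 1 := by
          have h1 := hPRmA 0 s t; have h2 := hPRmA 1 s t; linarith
        rw [hLdef]
        simp only [← add_div]
        rw [div_eq_iff hne]
        linear_combination hni - lam * hpr
      · intro x s t t'
        have hAi := hA x s t t'
        simp only [Fin.sum_univ_two] at hAi ⊢
        rw [hLdef]
        simp only [← add_div]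
        congr 1
        linear_combination hAi - lam * hPRmA x s t + lam * hPRmA x s t'
      · intro y t s s'
        have hBi := hB y t s s'
        simp only [Fin.sum_univ_two] at hBi ⊢
        rw [hLdef]
        simp only [← add_div]
        congr 1
        linear_combination hBi - lam * hPRmB y s t + lam * hPRmB y s' t
    have hch2 : CHSH L = 2 := by
      simp only [CHSH, corr, sgn, Fin.sum_univ_two]
      norm_num
      refine mul_left_cancel₀ hne ?_
      linear_combination m0000 - m0100 - m1000 + m1100
        + (m0010 - m0110 - m1010 + m1110) + (m0001 - m0101 - m1001 + m1101)
        - (m0011 - m0111 - m1011 + m1111) - hc - 2 * hlam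
    refine ⟨L, fine L hLbox hch2, hch2, ?_⟩
    intro x y s t
    rw [hLdef]
    field_simp
    ring

end
end

section
/- For CHSH-type boxes, the yield monotone M_CHSH satisfies: M_CHSH(R) = 2 if R is free, and M_CHSH(R) = CHSH_k(R) if R is nonfree, where k is the unique index with CHSH_k(R) > 2. Equivalently, for any box R with CHSH_k(R) > 2 and any LOSR operation τ taking CHSH-type boxes to CHSH-type boxes, CHSH_k(τ ∘ R) ≤ CHSH_k(R). -/
open Finset

noncomputable section

/-- A type-preserving operation on CHSH-type boxes: `τ x' y' s t x y s' t'`. -/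
abbrev Op : Type :=
  Fin 2 → Fin 2 → Fin 2 → Fin 2 → Fin 2 → Fin 2 → Fin 2 → Fin 2 → ℝ

/-- An LOSR operation (local operations and shared randomness). -/
def IsLOSR (τ : Op) : Prop :=
  ∃ (n : ℕ) (p : Fin n → ℝ)
    (pA pB : Fin n → Fin 2 → Fin 2 → Fin 2 → Fin 2 → ℝ),
    (∀ i, 0 ≤ p i) ∧ (∑ i, p i = 1) ∧
    (∀ i x' s x s', 0 ≤ pA i x' s x s') ∧
    (∀ i x s', ∑ x', ∑ s, pA i x' s x s' = 1) ∧
    (∀ i y' t y t', 0 ≤ pB i y' t y t') ∧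
    (∀ i y t', ∑ y', ∑ t, pB i y' t y t' = 1) ∧
    (∀ i x₁ x₂ s s', ∑ x', pA i x' s x₁ s' = ∑ x', pA i x' s x₂ s') ∧
    (∀ i y₁ y₂ t t', ∑ y', pB i y' t y₁ t' = ∑ y', pB i y' t y₂ t') ∧
    (∀ x' y' s t x y s' t',
      τ x' y' s t x y s' t' = ∑ i, p i * pA i x' s x s' * pB i y' t y t')

def applyOp (τ : Op) (R : Box) : Box := fun x' y' s' t' =>
  ∑ x, ∑ y, ∑ s, ∑ t, τ x' y' s t x y s' t' * R x y s t

def Conv (R R' : Box) : Prop := ∃ τ : Op, IsLOSR τ ∧ applyOp τ R = R'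

/-- The CHSH-yield monotone. -/
def MCHSH (R : Box) : ℝ := sSup {c : ℝ | ∃ R', Conv R R' ∧ c = CHSH R'}

namespace S9

lemma sgn0 : sgn 0 = 1 := rfl
lemma sgn1 : sgn 1 = -1 := rfl

lemma corr_expand (R : Box) (s t : Fin 2) :
    corr R s t = R 0 0 s t - R 0 1 s t - R 1 0 s t + R 1 1 s t := by
  simp [corr, Fin.sum_univ_two, sgn0, sgn1]; ring

lemma abs_corr_le_one (R : Box) (h0 : ∀ x y s t, 0 ≤ R x y s t)
    (h1 : ∀ s t, ∑ x, ∑ y, R x y s t = 1) (s t : Fin 2) : |corr R s t| ≤ 1 := by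
  have hn := h1 s t
  simp [Fin.sum_univ_two] at hn
  rw [corr_expand, abs_le]
  constructor <;> linarith [h0 0 0 s t, h0 0 1 s t, h0 1 0 s t, h0 1 1 s t]

lemma chshk_expand (σ : Fin 2 → Fin 2 → ℝ) (R : Box) :
    CHSHk σ R = σ 0 0 * corr R 0 0 + σ 0 1 * corr R 0 1 + σ 1 0 * corr R 1 0
      + σ 1 1 * corr R 1 1 := by
  simp [CHSHk, Fin.sum_univ_two]; ring

lemma chshk_le_four (σ : Fin 2 → Fin 2 → ℝ) (R : Box) (hσ : IsSignPattern σ)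
    (h0 : ∀ x y s t, 0 ≤ R x y s t) (h1 : ∀ s t, ∑ x, ∑ y, R x y s t = 1) :
    CHSHk σ R ≤ 4 := by
  have habs : ∀ s t, |corr R s t| ≤ 1 := abs_corr_le_one R h0 h1
  rw [chshk_expand]
  have key : ∀ s t : Fin 2, σ s t * corr R s t ≤ 1 := by
    intro s t
    rcases hσ.1 s t with h | h <;> rw [h] <;>
      cases' abs_le.1 (habs s t) with hl hr <;> linarith
  linarith [key 0 0, key 0 1, key 1 0, key 1 1]

lemma chshk_ge_neg_four (σ : Fin 2 → Fin 2 → ℝ) (R : Box) (hσ : IsSignPattern σ)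
    (h0 : ∀ x y s t, 0 ≤ R x y s t) (h1 : ∀ s t, ∑ x, ∑ y, R x y s t = 1) :
    -4 ≤ CHSHk σ R := by
  have habs : ∀ s t, |corr R s t| ≤ 1 := abs_corr_le_one R h0 h1
  rw [chshk_expand]
  have key : ∀ s t : Fin 2, -1 ≤ σ s t * corr R s t := by
    intro s t
    rcases hσ.1 s t with h | h <;> rw [h] <;>
      cases' abs_le.1 (habs s t) with hl hr <;> linarith
  linarith [key 0 0, key 0 1, key 1 0, key 1 1]

end S9

namespace S9

lemma quad_bound (a0 a1 c0 c1 : ℝ) (ha0 : |a0| ≤ 1) (ha1 : |a1| ≤ 1)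
    (hc0 : |c0| ≤ 1) (hc1 : |c1| ≤ 1) :
    a0*c0 + a0*c1 + a1*c0 - a1*c1 ≤ 2 := by
  rw [abs_le] at ha0 ha1 hc0 hc1
  rcases le_total 0 (c0 + c1) with h1 | h1 <;> rcases le_total 0 (c0 - c1) with h2 | h2
  · nlinarith [mul_nonneg (by linarith : (0:ℝ) ≤ 1 - a0) h1,
      mul_nonneg (by linarith : (0:ℝ) ≤ 1 - a1) h2]
  · nlinarith [mul_nonneg (by linarith : (0:ℝ) ≤ 1 - a0) h1,
      mul_nonneg (by linarith : (0:ℝ) ≤ 1 + a1) (by linarith : (0:ℝ) ≤ c1 - c0)]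
  · nlinarith [mul_nonneg (by linarith : (0:ℝ) ≤ 1 + a0) (by linarith : (0:ℝ) ≤ -(c0+c1)),
      mul_nonneg (by linarith : (0:ℝ) ≤ 1 - a1) h2]
  · nlinarith [mul_nonneg (by linarith : (0:ℝ) ≤ 1 + a0) (by linarith : (0:ℝ) ≤ -(c0+c1)),
      mul_nonneg (by linarith : (0:ℝ) ≤ 1 + a1) (by linarith : (0:ℝ) ≤ c1 - c0)]

lemma pattern_bound (σ : Fin 2 → Fin 2 → ℝ)
    (hs : ∀ s t, σ s t = 1 ∨ σ s t = -1)
    (hprod : σ 0 0 * σ 1 0 * σ 0 1 * σ 1 1 = -1)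
    (a0 a1 b0 b1 : ℝ) (ha0 : |a0| ≤ 1) (ha1 : |a1| ≤ 1)
    (hb0 : |b0| ≤ 1) (hb1 : |b1| ≤ 1) :
    σ 0 0 * (a0*b0) + σ 0 1 * (a0*b1) + σ 1 0 * (a1*b0) + σ 1 1 * (a1*b1) ≤ 2 := by
  have na0 : |(-a0)| ≤ 1 := by rwa [abs_neg]
  have na1 : |(-a1)| ≤ 1 := by rwa [abs_neg]
  have nb0 : |(-b0)| ≤ 1 := by rwa [abs_neg]
  have nb1 : |(-b1)| ≤ 1 := by rwa [abs_neg]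
  rcases hs 0 0 with h00 | h00 <;> rcases hs 0 1 with h01 | h01 <;>
    rcases hs 1 0 with h10 | h10 <;> rcases hs 1 1 with h11 | h11 <;>
    rw [h00, h01, h10, h11] <;>
    first
      | (norm_num [h00, h01, h10, h11] at hprod; done)
      | (linarith [quad_bound a0 a1 b0 b1 ha0 ha1 hb0 hb1])
      | (linarith [quad_bound a0 (-a1) b0 b1 ha0 na1 hb0 hb1])
      | (linarith [quad_bound a0 a1 b0 (-b1) ha0 ha1 hb0 nb1])
      | (linarith [quad_bound a1 a0 b1 b0 ha1 ha0 hb1 hb0])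
      | (linarith [quad_bound (-a0) (-a1) b0 b1 na0 na1 hb0 hb1])
      | (linarith [quad_bound (-a0) a1 b0 b1 na0 ha1 hb0 hb1])
      | (linarith [quad_bound (-a0) (-a1) b0 (-b1) na0 na1 hb0 nb1])
      | (linarith [quad_bound (-a1) (-a0) b1 b0 na1 na0 hb1 hb0])

end S9

namespace S9

def PR (σ : Fin 2 → Fin 2 → ℝ) : Box := fun x y s t => (1 + sgn x * sgn y * σ s t)/4

lemma fin2 (x : Fin 2) : x = 0 ∨ x = 1 := by omega

lemma sgn_cases (x : Fin 2) : sgn x = 1 ∨ sgn x = -1 := by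
  fin_cases x <;> simp [sgn]

lemma PR_nonneg (σ : Fin 2 → Fin 2 → ℝ) (hσ : IsSignPattern σ) :
    ∀ x y s t, 0 ≤ PR σ x y s t := by
  intro x y s t
  rcases sgn_cases x with hx | hx <;> rcases sgn_cases y with hy | hy <;>
    rcases hσ.1 s t with hst | hst <;> simp [PR, hx, hy, hst] <;> norm_num

lemma PR_norm (σ : Fin 2 → Fin 2 → ℝ) :
    ∀ s t, ∑ x, ∑ y, PR σ x y s t = 1 := by
  intro s t
  simp [PR, Fin.sum_univ_two, sgn0, sgn1]
  ring

lemma corr_PR (σ : Fin 2 → Fin 2 → ℝ) (s t : Fin 2) : corr (PR σ) s t = σ s t := by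
  rw [corr_expand]
  simp only [PR, sgn0, sgn1]
  ring

set_option maxHeartbeats 2000000 in
lemma entry_lb (R : Box) (hR : IsBox R) (σ : Fin 2 → Fin 2 → ℝ)
    (hσ : IsSignPattern σ) (x y s t : Fin 2) (h : sgn x * sgn y * σ s t = 1) :
    (CHSHk σ R - 2)/4 ≤ R x y s t := by
  obtain ⟨h0, h1, hA, hB⟩ := hR
  have hp := hσ.2
  have e00 : R 0 0 0 0 + R 0 1 0 0 + R 1 0 0 0 + R 1 1 0 0 = 1 := by
    have := h1 0 0; simp [Fin.sum_univ_two] at this; linarith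
  have e01 : R 0 0 0 1 + R 0 1 0 1 + R 1 0 0 1 + R 1 1 0 1 = 1 := by
    have := h1 0 1; simp [Fin.sum_univ_two] at this; linarith
  have e10 : R 0 0 1 0 + R 0 1 1 0 + R 1 0 1 0 + R 1 1 1 0 = 1 := by
    have := h1 1 0; simp [Fin.sum_univ_two] at this; linarith
  have e11 : R 0 0 1 1 + R 0 1 1 1 + R 1 0 1 1 + R 1 1 1 1 = 1 := by
    have := h1 1 1; simp [Fin.sum_univ_two] at this; linarith
  have a00 : R 0 0 0 0 + R 0 1 0 0 = R 0 0 0 1 + R 0 1 0 1 := by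
    have := hA 0 0 0 1; simpa [Fin.sum_univ_two] using this
  have a10 : R 1 0 0 0 + R 1 1 0 0 = R 1 0 0 1 + R 1 1 0 1 := by
    have := hA 1 0 0 1; simpa [Fin.sum_univ_two] using this
  have a01 : R 0 0 1 0 + R 0 1 1 0 = R 0 0 1 1 + R 0 1 1 1 := by
    have := hA 0 1 0 1; simpa [Fin.sum_univ_two] using this
  have a11 : R 1 0 1 0 + R 1 1 1 0 = R 1 0 1 1 + R 1 1 1 1 := by
    have := hA 1 1 0 1; simpa [Fin.sum_univ_two] using this
  have b00 : R 0 0 0 0 + R 1 0 0 0 = R 0 0 1 0 + R 1 0 1 0 := by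
    have := hB 0 0 0 1; simpa [Fin.sum_univ_two] using this
  have b10 : R 0 1 0 0 + R 1 1 0 0 = R 0 1 1 0 + R 1 1 1 0 := by
    have := hB 1 0 0 1; simpa [Fin.sum_univ_two] using this
  have b01 : R 0 0 0 1 + R 1 0 0 1 = R 0 0 1 1 + R 1 0 1 1 := by
    have := hB 0 1 0 1; simpa [Fin.sum_univ_two] using this
  have b11 : R 0 1 0 1 + R 1 1 0 1 = R 0 1 1 1 + R 1 1 1 1 := by
    have := hB 1 1 0 1; simpa [Fin.sum_univ_two] using this
  simp only [chshk_expand, corr_expand]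
  rcases hσ.1 0 0 with h00 | h00 <;> rcases hσ.1 0 1 with h01 | h01 <;>
    rcases hσ.1 1 0 with h10 | h10 <;> rcases hσ.1 1 1 with h11 | h11 <;>
    first
      | (norm_num [h00, h01, h10, h11] at hp; done)
      | (rw [h00, h01, h10, h11];
         rcases fin2 x with hx | hx <;> subst hx <;>
         rcases fin2 y with hy | hy <;> subst hy <;>
         rcases fin2 s with hs | hs <;> subst hs <;>
         rcases fin2 t with ht | ht <;> subst ht <;>
         first
           | (norm_num [sgn, h00, h01, h10, h11] at h; done)
           | (linarith [h0 0 0 0 0, h0 0 1 0 0, h0 1 0 0 0, h0 1 1 0 0,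
               h0 0 0 0 1, h0 0 1 0 1, h0 1 0 0 1, h0 1 1 0 1,
               h0 0 0 1 0, h0 0 1 1 0, h0 1 0 1 0, h0 1 1 1 0,
               h0 0 0 1 1, h0 0 1 1 1, h0 1 0 1 1, h0 1 1 1 1,
               e00, e01, e10, e11, a00, a10, a01, a11, b00, b10, b01, b11]))

end S9

namespace S9

set_option maxHeartbeats 2000000 in
lemma pattern_transfer (R : Box) (hR : IsBox R) (σ σ' : Fin 2 → Fin 2 → ℝ)
    (hσ : IsSignPattern σ) (hσ' : IsSignPattern σ') (h2 : 2 ≤ CHSHk σ R) :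
    CHSHk σ' R - ((CHSHk σ R - 2)/2) * CHSHk σ' (PR σ)
      ≤ 2 * (1 - (CHSHk σ R - 2)/2) := by
  have habs := fun s t => abs_le.1 (abs_corr_le_one R hR.1 hR.2.1 s t)
  have hp := hσ.2
  have hp' := hσ'.2
  rw [chshk_expand σ' R, chshk_expand σ R, chshk_expand σ' (PR σ)] at *
  rw [corr_PR, corr_PR, corr_PR, corr_PR]
  rcases hσ.1 0 0 with h00 | h00 <;> rcases hσ.1 0 1 with h01 | h01 <;>
    rcases hσ.1 1 0 with h10 | h10 <;> rcases hσ.1 1 1 with h11 | h11 <;>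
    first
      | (norm_num [h00, h01, h10, h11] at hp; done)
      | (rcases hσ'.1 0 0 with g00 | g00 <;> rcases hσ'.1 0 1 with g01 | g01 <;>
          rcases hσ'.1 1 0 with g10 | g10 <;> rcases hσ'.1 1 1 with g11 | g11 <;>
          first
            | (norm_num [g00, g01, g10, g11] at hp'; done)
            | (rw [h00, h01, h10, h11, g00, g01, g10, g11] at *;
               linarith [(habs 0 0).1, (habs 0 0).2, (habs 0 1).1, (habs 0 1).2,
                 (habs 1 0).1, (habs 1 0).2, (habs 1 1).1, (habs 1 1).2]))

end S9

namespace S9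

lemma applyOp_nonneg (τ : Op) (R : Box) (hτ : IsLOSR τ)
    (h0 : ∀ x y s t, 0 ≤ R x y s t) : ∀ x' y' s' t', 0 ≤ applyOp τ R x' y' s' t' := by
  obtain ⟨n, p, pA, pB, hp0, hp1, hA0, hA1, hB0, hB1, hAx, hBy, hrep⟩ := hτ
  intro x' y' s' t'
  apply Finset.sum_nonneg; intro x _
  apply Finset.sum_nonneg; intro y _
  apply Finset.sum_nonneg; intro s _
  apply Finset.sum_nonneg; intro t _
  rw [hrep]
  apply mul_nonneg _ (h0 x y s t)
  apply Finset.sum_nonneg; intro i _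
  exact mul_nonneg (mul_nonneg (hp0 i) (hA0 i x' s x s')) (hB0 i y' t y t')

lemma applyOp_norm (τ : Op) (R : Box) (hτ : IsLOSR τ)
    (hRn : ∀ s t, ∑ x, ∑ y, R x y s t = 1) :
    ∀ s' t', ∑ x', ∑ y', applyOp τ R x' y' s' t' = 1 := by
  obtain ⟨n, p, pA, pB, hp0, hp1, hA0, hA1, hB0, hB1, hAx, hBy, hrep⟩ := hτ
  intro s' t'
  have hApp : ∀ x' y', applyOp τ R x' y' s' t' = ∑ i, p i *
      ∑ x, ∑ y, ∑ s, ∑ t, pA i x' s x s' * pB i y' t y t' * R x y s t := by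
    intro x' y'
    simp only [applyOp, hrep, Fin.sum_univ_two, Finset.sum_mul, ← Finset.sum_add_distrib]
    exact Finset.sum_congr rfl fun i _ => by ring
  have hGA : ∀ i s x, pA i 0 s x s' + pA i 1 s x s'
      = pA i 0 s 0 s' + pA i 1 s 0 s' := by
    intro i s x
    have := hAx i x 0 s s'
    simpa [Fin.sum_univ_two] using this
  have hGB : ∀ i t y, pB i 0 t y t' + pB i 1 t y t'
      = pB i 0 t 0 t' + pB i 1 t 0 t' := by
    intro i t y
    have := hBy i y 0 t t'
    simpa [Fin.sum_univ_two] using this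
  have hnA : ∀ i, pA i 0 0 0 s' + pA i 0 1 0 s' + (pA i 1 0 0 s' + pA i 1 1 0 s') = 1 := by
    intro i
    have := hA1 i 0 s'
    simpa [Fin.sum_univ_two] using this
  have hnB : ∀ i, pB i 0 0 0 t' + pB i 0 1 0 t' + (pB i 1 0 0 t' + pB i 1 1 0 t') = 1 := by
    intro i
    have := hB1 i 0 t'
    simpa [Fin.sum_univ_two] using this
  have hR : ∀ s t, R 0 0 s t + R 0 1 s t + (R 1 0 s t + R 1 1 s t) = 1 := by
    intro s t
    have := hRn s t
    simpa [Fin.sum_univ_two] using this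
  rw [Fin.sum_univ_two]
  rw [Fin.sum_univ_two, Fin.sum_univ_two]
  rw [hApp 0 0, hApp 0 1, hApp 1 0, hApp 1 1, ← Finset.sum_add_distrib,
    ← Finset.sum_add_distrib, ← Finset.sum_add_distrib, ← hp1]
  apply Finset.sum_congr rfl
  intro i _
  simp only [Fin.sum_univ_two]
  linear_combination
    (p i * ((pB i 0 0 0 t' + pB i 1 0 0 t') * R 1 0 0 0
          + (pB i 0 0 1 t' + pB i 1 0 1 t') * R 1 1 0 0
          + (pB i 0 1 0 t' + pB i 1 1 0 t') * R 1 0 0 1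
          + (pB i 0 1 1 t' + pB i 1 1 1 t') * R 1 1 0 1)) * hGA i 0 1
    + (p i * ((pB i 0 0 0 t' + pB i 1 0 0 t') * R 1 0 1 0
          + (pB i 0 0 1 t' + pB i 1 0 1 t') * R 1 1 1 0
          + (pB i 0 1 0 t' + pB i 1 1 0 t') * R 1 0 1 1
          + (pB i 0 1 1 t' + pB i 1 1 1 t') * R 1 1 1 1)) * hGA i 1 1
    + (p i * ((pA i 0 0 0 s' + pA i 1 0 0 s') * (R 0 1 0 0 + R 1 1 0 0)
          + (pA i 0 1 0 s' + pA i 1 1 0 s') * (R 0 1 1 0 + R 1 1 1 0))) * hGB i 0 1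
    + (p i * ((pA i 0 0 0 s' + pA i 1 0 0 s') * (R 0 1 0 1 + R 1 1 0 1)
          + (pA i 0 1 0 s' + pA i 1 1 0 s') * (R 0 1 1 1 + R 1 1 1 1))) * hGB i 1 1
    + (p i * ((pA i 0 0 0 s' + pA i 1 0 0 s') * (pB i 0 0 0 t' + pB i 1 0 0 t'))) * hR 0 0
    + (p i * ((pA i 0 0 0 s' + pA i 1 0 0 s') * (pB i 0 1 0 t' + pB i 1 1 0 t'))) * hR 0 1
    + (p i * ((pA i 0 1 0 s' + pA i 1 1 0 s') * (pB i 0 0 0 t' + pB i 1 0 0 t'))) * hR 1 0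
    + (p i * ((pA i 0 1 0 s' + pA i 1 1 0 s') * (pB i 0 1 0 t' + pB i 1 1 0 t'))) * hR 1 1
    + (p i * (pB i 0 0 0 t' + pB i 1 0 0 t' + pB i 0 1 0 t' + pB i 1 1 0 t')) * hnA i
    + (p i) * hnB i

end S9

namespace S9

lemma applyOp_comb (τ : Op) (P Q : Box) (a b : ℝ) (x' y' s' t' : Fin 2) :
    applyOp τ (fun x y s t => a * P x y s t + b * Q x y s t) x' y' s' t'
      = a * applyOp τ P x' y' s' t' + b * applyOp τ Q x' y' s' t' := by
  simp only [applyOp, Fin.sum_univ_two]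
  ring

lemma chshk_comb (σ : Fin 2 → Fin 2 → ℝ) (P Q : Box) (a b : ℝ)
    (W : Box) (hW : ∀ x y s t, W x y s t = a * P x y s t + b * Q x y s t) :
    CHSHk σ W = a * CHSHk σ P + b * CHSHk σ Q := by
  simp only [chshk_expand, corr_expand, hW]
  ring

lemma losr_free (τ : Op) (R : Box) (hτ : IsLOSR τ) (hR : IsFree R) :
    IsFree (applyOp τ R) := by
  obtain ⟨n, p, pA, pB, hp0, hp1, hA0, hA1, hB0, hB1, hAx, hBy, hrep⟩ := hτ
  obtain ⟨m, q, qA, qB, hq0, hq1, hqA0, hqA1, hqB0, hqB1, hqrep⟩ := hR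
  refine ⟨n*m,
    fun k => p (finProdFinEquiv.symm k).1 * q (finProdFinEquiv.symm k).2,
    fun k x' s' => ∑ x, ∑ s, pA (finProdFinEquiv.symm k).1 x' s x s'
      * qA (finProdFinEquiv.symm k).2 x s,
    fun k y' t' => ∑ y, ∑ t, pB (finProdFinEquiv.symm k).1 y' t y t'
      * qB (finProdFinEquiv.symm k).2 y t,
    ?_, ?_, ?_, ?_, ?_, ?_, ?_⟩
  · intro k; exact mul_nonneg (hp0 _) (hq0 _)
  · show (∑ k : Fin (n*m), p (finProdFinEquiv.symm k).1 * q (finProdFinEquiv.symm k).2) = 1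
    have mid : ∑ ij : Fin n × Fin m, p ij.1 * q ij.2 = ∑ i, ∑ j, p i * q j :=
      Fintype.sum_prod_type _
    rw [(Fintype.sum_equiv finProdFinEquiv (fun ij : Fin n × Fin m => p ij.1 * q ij.2)
      (fun k => p (finProdFinEquiv.symm k).1 * q (finProdFinEquiv.symm k).2)
      (fun ij => by simp)).symm, mid, ← Finset.sum_mul_sum, hp1, hq1, one_mul]
  · intro k x' s'
    apply Finset.sum_nonneg; intro x _
    apply Finset.sum_nonneg; intro s _
    exact mul_nonneg (hA0 _ _ _ _ _) (hqA0 _ _ _)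
  · intro k s'
    set i := (finProdFinEquiv.symm k).1 with hi
    set j := (finProdFinEquiv.symm k).2 with hj
    have hGA : ∀ s x, pA i 0 s x s' + pA i 1 s x s'
        = pA i 0 s 0 s' + pA i 1 s 0 s' := by
      intro s x; simpa [Fin.sum_univ_two] using hAx i x 0 s s'
    have hnA : pA i 0 0 0 s' + pA i 0 1 0 s' + (pA i 1 0 0 s' + pA i 1 1 0 s') = 1 := by
      simpa [Fin.sum_univ_two] using hA1 i 0 s'
    have hqn : ∀ s, qA j 0 s + qA j 1 s = 1 := by
      intro s; simpa [Fin.sum_univ_two] using hqA1 j s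
    simp only [Fin.sum_univ_two]
    linear_combination (qA j 1 0) * hGA 0 1 + (qA j 1 1) * hGA 1 1
      + (pA i 0 0 0 s' + pA i 1 0 0 s') * hqn 0
      + (pA i 0 1 0 s' + pA i 1 1 0 s') * hqn 1 + hnA
  · intro k y' t'
    apply Finset.sum_nonneg; intro y _
    apply Finset.sum_nonneg; intro t _
    exact mul_nonneg (hB0 _ _ _ _ _) (hqB0 _ _ _)
  · intro k t'
    set i := (finProdFinEquiv.symm k).1 with hi
    set j := (finProdFinEquiv.symm k).2 with hj
    have hGB : ∀ t y, pB i 0 t y t' + pB i 1 t y t'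
        = pB i 0 t 0 t' + pB i 1 t 0 t' := by
      intro t y; simpa [Fin.sum_univ_two] using hBy i y 0 t t'
    have hnB : pB i 0 0 0 t' + pB i 0 1 0 t' + (pB i 1 0 0 t' + pB i 1 1 0 t') = 1 := by
      simpa [Fin.sum_univ_two] using hB1 i 0 t'
    have hqn : ∀ t, qB j 0 t + qB j 1 t = 1 := by
      intro t; simpa [Fin.sum_univ_two] using hqB1 j t
    simp only [Fin.sum_univ_two]
    linear_combination (qB j 1 0) * hGB 0 1 + (qB j 1 1) * hGB 1 1
      + (pB i 0 0 0 t' + pB i 1 0 0 t') * hqn 0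
      + (pB i 0 1 0 t' + pB i 1 1 0 t') * hqn 1 + hnB
  · intro x y s t
    have key : applyOp τ R x y s t = ∑ i, ∑ j, p i * q j
        * (∑ x₁, ∑ s₁, pA i x s₁ x₁ s * qA j x₁ s₁)
        * (∑ y₁, ∑ t₁, pB i y t₁ y₁ t * qB j y₁ t₁) := by
      simp only [applyOp, hrep, hqrep, Fin.sum_univ_two, Finset.sum_mul_sum,
        ← Finset.sum_add_distrib]
      refine Finset.sum_congr rfl fun i _ => Finset.sum_congr rfl fun j _ => by ring
    show applyOp τ R x y s t = ∑ k : Fin (n*m),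
      p (finProdFinEquiv.symm k).1 * q (finProdFinEquiv.symm k).2
        * (∑ x₁, ∑ s₁, pA (finProdFinEquiv.symm k).1 x s₁ x₁ s
            * qA (finProdFinEquiv.symm k).2 x₁ s₁)
        * (∑ y₁, ∑ t₁, pB (finProdFinEquiv.symm k).1 y t₁ y₁ t
            * qB (finProdFinEquiv.symm k).2 y₁ t₁)
    have mid : ∑ ij : Fin n × Fin m, (p ij.1 * q ij.2
        * (∑ x₁, ∑ s₁, pA ij.1 x s₁ x₁ s * qA ij.2 x₁ s₁)
        * (∑ y₁, ∑ t₁, pB ij.1 y t₁ y₁ t * qB ij.2 y₁ t₁))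
        = ∑ i, ∑ j, p i * q j * (∑ x₁, ∑ s₁, pA i x s₁ x₁ s * qA j x₁ s₁)
          * (∑ y₁, ∑ t₁, pB i y t₁ y₁ t * qB j y₁ t₁) := Fintype.sum_prod_type _
    rw [key, ← mid]
    exact Fintype.sum_equiv finProdFinEquiv _ _ (fun ij => by simp)

end S9

namespace S9

def PP (L : Box) (u b : Fin 2) : ℝ := L 0 b 0 u
def QQ (L : Box) (u b : Fin 2) : ℝ := L 0 b 1 u
def BB (L : Box) (u b : Fin 2) : ℝ := L 0 b 0 u + L 1 b 0 u
def lo (L : Box) (u b : Fin 2) : ℝ := max 0 (PP L u b + QQ L u b - BB L u b)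
def hi (L : Box) (u b : Fin 2) : ℝ := min (PP L u b) (QQ L u b)
def zz (L : Box) : ℝ := max (lo L 0 0 + lo L 0 1) (lo L 1 0 + lo L 1 1)
def ww (L : Box) (u b : Fin 2) : ℝ :=
  if b = 0 then max (lo L u 0) (zz L - hi L u 1)
  else zz L - max (lo L u 0) (zz L - hi L u 1)
def trip (L : Box) (u : Fin 2) (a0 a1 b : Fin 2) : ℝ :=
  if a0 = 0 then (if a1 = 0 then ww L u b else PP L u b - ww L u b)
  else (if a1 = 0 then QQ L u b - ww L u b
        else BB L u b - PP L u b - QQ L u b + ww L u b)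
def mm (L : Box) (a0 a1 : Fin 2) : ℝ := trip L 0 a0 a1 0 + trip L 0 a0 a1 1
def joint (L : Box) (a0 a1 b0 b1 : Fin 2) : ℝ :=
  if mm L a0 a1 = 0 then 0 else trip L 0 a0 a1 b0 * trip L 1 a0 a1 b1 / mm L a0 a1

def pat (u v w z : ℝ) : Fin 2 → Fin 2 → ℝ := fun s t =>
  if s = 0 then (if t = 0 then u else v) else (if t = 0 then w else z)

lemma pat_sign (u v w z : ℝ) (hu : u = 1 ∨ u = -1) (hv : v = 1 ∨ v = -1)
    (hw : w = 1 ∨ w = -1) (hz : z = 1 ∨ z = -1) (hp : u * w * v * z = -1) :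
    IsSignPattern (pat u v w z) := by
  constructor
  · intro s t
    rcases fin2 s with hs | hs <;> rcases fin2 t with ht | ht <;>
      subst hs <;> subst ht <;> simp [pat] <;> assumption
  · simpa [pat] using hp

def E16 : ((Fin 2 × Fin 2) × (Fin 2 × Fin 2)) ≃ Fin (2*2*(2*2)) :=
  (Equiv.prodCongr finProdFinEquiv finProdFinEquiv).trans finProdFinEquiv

end S9

namespace S9

set_option maxHeartbeats 4000000 in
theorem fine (L : Box) (hL : IsBox L)
    (hC : ∀ σ, IsSignPattern σ → CHSHk σ L ≤ 2) : IsFree L := by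
  obtain ⟨h0, h1, hA, hB⟩ := hL
  -- expanded box facts
  have e00 : L 0 0 0 0 + L 0 1 0 0 + L 1 0 0 0 + L 1 1 0 0 = 1 := by
    have := h1 0 0; simp [Fin.sum_univ_two] at this; linarith
  have e01 : L 0 0 0 1 + L 0 1 0 1 + L 1 0 0 1 + L 1 1 0 1 = 1 := by
    have := h1 0 1; simp [Fin.sum_univ_two] at this; linarith
  have e10 : L 0 0 1 0 + L 0 1 1 0 + L 1 0 1 0 + L 1 1 1 0 = 1 := by
    have := h1 1 0; simp [Fin.sum_univ_two] at this; linarith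
  have e11 : L 0 0 1 1 + L 0 1 1 1 + L 1 0 1 1 + L 1 1 1 1 = 1 := by
    have := h1 1 1; simp [Fin.sum_univ_two] at this; linarith
  have a00 : L 0 0 0 0 + L 0 1 0 0 = L 0 0 0 1 + L 0 1 0 1 := by
    have := hA 0 0 0 1; simpa [Fin.sum_univ_two] using this
  have a10 : L 1 0 0 0 + L 1 1 0 0 = L 1 0 0 1 + L 1 1 0 1 := by
    have := hA 1 0 0 1; simpa [Fin.sum_univ_two] using this
  have a01 : L 0 0 1 0 + L 0 1 1 0 = L 0 0 1 1 + L 0 1 1 1 := by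
    have := hA 0 1 0 1; simpa [Fin.sum_univ_two] using this
  have a11 : L 1 0 1 0 + L 1 1 1 0 = L 1 0 1 1 + L 1 1 1 1 := by
    have := hA 1 1 0 1; simpa [Fin.sum_univ_two] using this
  have b00 : L 0 0 0 0 + L 1 0 0 0 = L 0 0 1 0 + L 1 0 1 0 := by
    have := hB 0 0 0 1; simpa [Fin.sum_univ_two] using this
  have b10 : L 0 1 0 0 + L 1 1 0 0 = L 0 1 1 0 + L 1 1 1 0 := by
    have := hB 1 0 0 1; simpa [Fin.sum_univ_two] using this
  have b01 : L 0 0 0 1 + L 1 0 0 1 = L 0 0 1 1 + L 1 0 1 1 := by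
    have := hB 0 1 0 1; simpa [Fin.sum_univ_two] using this
  have b11 : L 0 1 0 1 + L 1 1 0 1 = L 0 1 1 1 + L 1 1 1 1 := by
    have := hB 1 1 0 1; simpa [Fin.sum_univ_two] using this
  -- the 8 CHSH inequalities in expanded form
  have c1 := hC (pat 1 1 1 (-1)) (pat_sign _ _ _ _ (by norm_num) (by norm_num)
    (by norm_num) (by norm_num) (by norm_num))
  have c2 := hC (pat 1 1 (-1) 1) (pat_sign _ _ _ _ (by norm_num) (by norm_num)
    (by norm_num) (by norm_num) (by norm_num))
  have c3 := hC (pat 1 (-1) 1 1) (pat_sign _ _ _ _ (by norm_num) (by norm_num)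
    (by norm_num) (by norm_num) (by norm_num))
  have c4 := hC (pat (-1) 1 1 1) (pat_sign _ _ _ _ (by norm_num) (by norm_num)
    (by norm_num) (by norm_num) (by norm_num))
  have c5 := hC (pat (-1) (-1) (-1) 1) (pat_sign _ _ _ _ (by norm_num) (by norm_num)
    (by norm_num) (by norm_num) (by norm_num))
  have c6 := hC (pat (-1) (-1) 1 (-1)) (pat_sign _ _ _ _ (by norm_num) (by norm_num)
    (by norm_num) (by norm_num) (by norm_num))
  have c7 := hC (pat (-1) 1 (-1) (-1)) (pat_sign _ _ _ _ (by norm_num) (by norm_num)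
    (by norm_num) (by norm_num) (by norm_num))
  have c8 := hC (pat 1 (-1) (-1) (-1)) (pat_sign _ _ _ _ (by norm_num) (by norm_num)
    (by norm_num) (by norm_num) (by norm_num))
  simp only [chshk_expand, corr_expand, pat] at c1 c2 c3 c4 c5 c6 c7 c8
  norm_num at c1 c2 c3 c4 c5 c6 c7 c8
  -- BB alternative form via no-signalling
  have hBalt : ∀ u b, BB L u b = L 0 b 1 u + L 1 b 1 u := by
    intro u b
    have := hB b u 0 1
    simp only [Fin.sum_univ_two] at this
    simp only [BB]
    linarith
  have hpos : ∀ x y s t, (0:ℝ) ≤ L x y s t := h0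
  -- lo ≤ hi
  have hlo_hi : ∀ u b, lo L u b ≤ hi L u b := by
    intro u b
    have h1 := hBalt u b
    apply max_le (le_min (hpos 0 b 0 u) (hpos 0 b 1 u))
    apply le_min
    · simp only [PP, QQ, BB] at *; linarith [hpos 1 b 1 u]
    · simp only [PP, QQ, BB] at *; linarith [hpos 1 b 0 u]
  have hlo0 : ∀ u b, (0:ℝ) ≤ lo L u b := fun u b => le_max_left 0 _
  have hhiP : ∀ u b, hi L u b ≤ PP L u b := fun u b => min_le_left _ _
  have hhiQ : ∀ u b, hi L u b ≤ QQ L u b := fun u b => min_le_right _ _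
  have hloPQ : ∀ u b, PP L u b + QQ L u b - BB L u b ≤ lo L u b :=
    fun u b => le_max_right _ _
  -- the two cross inequalities
  have hz_le : ∀ u, zz L ≤ hi L u 0 + hi L u 1 := by
    intro u
    rcases fin2 u with hu | hu <;> subst hu <;> apply max_le
    · linarith [hlo_hi 0 0, hlo_hi 0 1]
    · simp only [lo, hi, PP, QQ, BB, max_def, min_def]
      split_ifs <;>
        linarith [hpos 0 0 0 0, hpos 0 1 0 0, hpos 1 0 0 0, hpos 1 1 0 0,
          hpos 0 0 0 1, hpos 0 1 0 1, hpos 1 0 0 1, hpos 1 1 0 1,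
          hpos 0 0 1 0, hpos 0 1 1 0, hpos 1 0 1 0, hpos 1 1 1 0,
          hpos 0 0 1 1, hpos 0 1 1 1, hpos 1 0 1 1, hpos 1 1 1 1,
          e00, e01, e10, e11, a00, a10, a01, a11, b00, b10, b01, b11,
          c1, c2, c3, c4, c5, c6, c7, c8]
    · simp only [lo, hi, PP, QQ, BB, max_def, min_def]
      split_ifs <;>
        linarith [hpos 0 0 0 0, hpos 0 1 0 0, hpos 1 0 0 0, hpos 1 1 0 0,
          hpos 0 0 0 1, hpos 0 1 0 1, hpos 1 0 0 1, hpos 1 1 0 1,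
          hpos 0 0 1 0, hpos 0 1 1 0, hpos 1 0 1 0, hpos 1 1 1 0,
          hpos 0 0 1 1, hpos 0 1 1 1, hpos 1 0 1 1, hpos 1 1 1 1,
          e00, e01, e10, e11, a00, a10, a01, a11, b00, b10, b01, b11,
          c1, c2, c3, c4, c5, c6, c7, c8]
    · linarith [hlo_hi 1 0, hlo_hi 1 1]
  have hzlo : ∀ u, lo L u 0 + lo L u 1 ≤ zz L := by
    intro u
    rcases fin2 u with hu | hu <;> subst hu
    · exact le_max_left _ _
    · exact le_max_right _ _
  have hz0 : (0:ℝ) ≤ zz L := le_trans (by linarith [hlo0 0 0, hlo0 0 1]) (hzlo 0)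
  -- bounds on ww
  have hww0 : ∀ u, ww L u 0 = max (lo L u 0) (zz L - hi L u 1) := by
    intro u; simp [ww]
  have hww1 : ∀ u, ww L u 1 = zz L - max (lo L u 0) (zz L - hi L u 1) := by
    intro u; simp [ww]
  have hww_lo : ∀ u b, lo L u b ≤ ww L u b := by
    intro u b
    rcases fin2 b with hb | hb <;> subst hb
    · rw [hww0]; exact le_max_left _ _
    · rw [hww1]
      have h2 : max (lo L u 0) (zz L - hi L u 1) ≤ zz L - lo L u 1 :=
        max_le (by linarith [hzlo u]) (by linarith [hlo_hi u 1])
      linarith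
  have hww_hi : ∀ u b, ww L u b ≤ hi L u b := by
    intro u b
    rcases fin2 b with hb | hb <;> subst hb
    · rw [hww0]; exact max_le (hlo_hi u 0) (by linarith [hz_le u])
    · rw [hww1]; linarith [le_max_right (lo L u 0) (zz L - hi L u 1)]
  have hwsum : ∀ u, ww L u 0 + ww L u 1 = zz L := by
    intro u; rw [hww0, hww1]; ring
  -- facts about trip
  have htrip_nn : ∀ u a0 a1 b, 0 ≤ trip L u a0 a1 b := by
    intro u a0 a1 b
    rcases fin2 a0 with h | h <;> subst h <;> rcases fin2 a1 with h | h <;> subst h <;>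
      simp only [trip] <;> norm_num
    · linarith [hww_lo u b, hlo0 u b]
    · linarith [hww_hi u b, hhiP u b]
    · linarith [hww_hi u b, hhiQ u b]
    · linarith [hww_lo u b, hloPQ u b]
  have ht_a : ∀ u a0 b, trip L u a0 0 b + trip L u a0 1 b = L a0 b 0 u := by
    intro u a0 b
    rcases fin2 a0 with h | h <;> subst h <;> simp only [trip] <;> norm_num
    · simp [PP]
    · simp only [PP, QQ, BB]; ring
  have ht_b : ∀ u a1 b, trip L u 0 a1 b + trip L u 1 a1 b = L a1 b 1 u := by
    intro u a1 b
    rcases fin2 a1 with h | h <;> subst h <;> simp only [trip] <;> norm_num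
    · simp [QQ]
    · have := hBalt u b; simp only [PP, QQ, BB] at *; linarith
  have hmm_eq : ∀ a0 a1, mm L a0 a1 = trip L 1 a0 a1 0 + trip L 1 a0 a1 1 := by
    intro a0 a1
    have hP : PP L 0 0 + PP L 0 1 = PP L 1 0 + PP L 1 1 := by
      simp only [PP]; linarith [a00]
    have hQ : QQ L 0 0 + QQ L 0 1 = QQ L 1 0 + QQ L 1 1 := by
      simp only [QQ]; linarith [a01]
    have hBs : BB L 0 0 + BB L 0 1 = BB L 1 0 + BB L 1 1 := by
      simp only [BB]; linarith [e00, e01]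
    have hw0 := hwsum 0
    have hw1 := hwsum 1
    rcases fin2 a0 with h | h <;> subst h <;> rcases fin2 a1 with h | h <;> subst h <;>
      simp only [mm, trip] <;> norm_num <;> linarith
  have hmm_nn : ∀ a0 a1, 0 ≤ mm L a0 a1 := by
    intro a0 a1; have := htrip_nn 0 a0 a1 0; have := htrip_nn 0 a0 a1 1
    simp only [mm]; linarith
  have ht0_le : ∀ a0 a1 b, trip L 0 a0 a1 b ≤ mm L a0 a1 := by
    intro a0 a1 b
    rcases fin2 b with h | h <;> subst h <;> simp only [mm] <;>
      [linarith [htrip_nn 0 a0 a1 1]; linarith [htrip_nn 0 a0 a1 0]]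
  have ht1_le : ∀ a0 a1 b, trip L 1 a0 a1 b ≤ mm L a0 a1 := by
    intro a0 a1 b
    rw [hmm_eq]
    rcases fin2 b with h | h <;> subst h <;>
      [linarith [htrip_nn 1 a0 a1 1]; linarith [htrip_nn 1 a0 a1 0]]
  -- facts about joint
  have hjoint_nn : ∀ a0 a1 b0 b1, 0 ≤ joint L a0 a1 b0 b1 := by
    intro a0 a1 b0 b1
    simp only [joint]
    split_ifs with hm
    · exact le_refl 0
    · exact div_nonneg (mul_nonneg (htrip_nn 0 a0 a1 b0) (htrip_nn 1 a0 a1 b1)) (hmm_nn a0 a1)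
  have hj1 : ∀ a0 a1 b0, joint L a0 a1 b0 0 + joint L a0 a1 b0 1 = trip L 0 a0 a1 b0 := by
    intro a0 a1 b0
    simp only [joint]
    split_ifs with hm
    · have h2 := ht0_le a0 a1 b0
      have h3 := htrip_nn 0 a0 a1 b0
      rw [hm] at h2
      linarith
    · rw [← add_div, ← mul_add, ← hmm_eq, mul_div_assoc, div_self hm, mul_one]
  have hj2 : ∀ a0 a1 b1, joint L a0 a1 0 b1 + joint L a0 a1 1 b1 = trip L 1 a0 a1 b1 := by
    intro a0 a1 b1
    simp only [joint]
    split_ifs with hm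
    · have h2 := ht1_le a0 a1 b1
      have h3 := htrip_nn 1 a0 a1 b1
      rw [hm] at h2
      linarith
    · rw [← add_div, ← add_mul]
      have : trip L 0 a0 a1 0 + trip L 0 a0 a1 1 = mm L a0 a1 := rfl
      rw [this, mul_comm, mul_div_assoc, div_self hm, mul_one]
  -- assemble the local model
  refine ⟨2*2*(2*2),
    fun k => joint L (E16.symm k).1.1 (E16.symm k).1.2 (E16.symm k).2.1 (E16.symm k).2.2,
    fun k x s => if x = (if s = 0 then (E16.symm k).1.1 else (E16.symm k).1.2) then 1 else 0,
    fun k y t => if y = (if t = 0 then (E16.symm k).2.1 else (E16.symm k).2.2) then 1 else 0,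
    ?_, ?_, ?_, ?_, ?_, ?_, ?_⟩
  · intro k; exact hjoint_nn _ _ _ _
  · show (∑ k : Fin (2*2*(2*2)), joint L (E16.symm k).1.1 (E16.symm k).1.2
        (E16.symm k).2.1 (E16.symm k).2.2) = 1
    have mid : ∑ d : (Fin 2 × Fin 2) × Fin 2 × Fin 2, joint L d.1.1 d.1.2 d.2.1 d.2.2
        = ∑ a0, ∑ a1, ∑ b0, ∑ b1, joint L a0 a1 b0 b1 := by
      simp [Fintype.sum_prod_type]
    rw [← Fintype.sum_equiv E16
      (fun d : (Fin 2 × Fin 2) × Fin 2 × Fin 2 => joint L d.1.1 d.1.2 d.2.1 d.2.2)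
      (fun k => joint L (E16.symm k).1.1 (E16.symm k).1.2 (E16.symm k).2.1 (E16.symm k).2.2)
      (fun d => by simp), mid]
    simp only [Fin.sum_univ_two]
    linarith [hj1 0 0 0, hj1 0 0 1, hj1 0 1 0, hj1 0 1 1,
      hj1 1 0 0, hj1 1 0 1, hj1 1 1 0, hj1 1 1 1,
      ht_a 0 0 0, ht_a 0 0 1, ht_a 0 1 0, ht_a 0 1 1, e00]
  · intro k x s; dsimp only; split_ifs <;> norm_num
  · intro k s
    rcases fin2 (if s = 0 then (E16.symm k).1.1 else (E16.symm k).1.2) with h | h <;>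
      simp [Fin.sum_univ_two, h]
  · intro k y t; dsimp only; split_ifs <;> norm_num
  · intro k t
    rcases fin2 (if t = 0 then (E16.symm k).2.1 else (E16.symm k).2.2) with h | h <;>
      simp [Fin.sum_univ_two, h]
  · intro x y s t
    show L x y s t = ∑ k : Fin (2*2*(2*2)),
      joint L (E16.symm k).1.1 (E16.symm k).1.2 (E16.symm k).2.1 (E16.symm k).2.2
        * (if x = (if s = 0 then (E16.symm k).1.1 else (E16.symm k).1.2) then 1 else 0)
        * (if y = (if t = 0 then (E16.symm k).2.1 else (E16.symm k).2.2) then 1 else 0)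
    rw [← Fintype.sum_equiv E16
      (fun d : (Fin 2 × Fin 2) × Fin 2 × Fin 2 => joint L d.1.1 d.1.2 d.2.1 d.2.2
        * (if x = (if s = 0 then d.1.1 else d.1.2) then 1 else 0)
        * (if y = (if t = 0 then d.2.1 else d.2.2) then 1 else 0))
      (fun k => joint L (E16.symm k).1.1 (E16.symm k).1.2 (E16.symm k).2.1 (E16.symm k).2.2
        * (if x = (if s = 0 then (E16.symm k).1.1 else (E16.symm k).1.2) then 1 else 0)
        * (if y = (if t = 0 then (E16.symm k).2.1 else (E16.symm k).2.2) then 1 else 0))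
      (fun d => by simp)]
    have mid : ∑ d : (Fin 2 × Fin 2) × Fin 2 × Fin 2, (joint L d.1.1 d.1.2 d.2.1 d.2.2
        * (if x = (if s = 0 then d.1.1 else d.1.2) then 1 else 0)
        * (if y = (if t = 0 then d.2.1 else d.2.2) then 1 else 0))
        = ∑ a0, ∑ a1, ∑ b0, ∑ b1, (joint L a0 a1 b0 b1
        * (if x = (if s = 0 then a0 else a1) then 1 else 0)
        * (if y = (if t = 0 then b0 else b1) then 1 else 0)) := by
      simp [Fintype.sum_prod_type]
    rw [mid]
    rcases fin2 s with h | h <;> subst h <;> rcases fin2 t with h | h <;> subst h <;>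
      rcases fin2 x with h | h <;> subst h <;> rcases fin2 y with h | h <;> subst h <;>
      simp only [Fin.sum_univ_two] <;> norm_num <;>
      linarith [hj1 0 0 0, hj1 0 0 1, hj1 0 1 0, hj1 0 1 1,
        hj1 1 0 0, hj1 1 0 1, hj1 1 1 0, hj1 1 1 1,
        hj2 0 0 0, hj2 0 0 1, hj2 0 1 0, hj2 0 1 1,
        hj2 1 0 0, hj2 1 0 1, hj2 1 1 0, hj2 1 1 1,
        ht_a 0 0 0, ht_a 0 0 1, ht_a 0 1 0, ht_a 0 1 1,
        ht_a 1 0 0, ht_a 1 0 1, ht_a 1 1 0, ht_a 1 1 1,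
        ht_b 0 0 0, ht_b 0 0 1, ht_b 0 1 0, ht_b 0 1 1,
        ht_b 1 0 0, ht_b 1 0 1, ht_b 1 1 0, ht_b 1 1 1]

end S9

namespace S9

lemma free_chshk_le_two (L : Box) (σ : Fin 2 → Fin 2 → ℝ) (hσ : IsSignPattern σ)
    (hL : IsFree L) : CHSHk σ L ≤ 2 := by
  obtain ⟨n, p, qA, qB, hp, hp1, hA0, hA1, hB0, hB1, hrep⟩ := hL
  have hAsum : ∀ i s, qA i 0 s + qA i 1 s = 1 := by
    intro i s; have := hA1 i s; simpa [Fin.sum_univ_two] using this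
  have hBsum : ∀ i t, qB i 0 t + qB i 1 t = 1 := by
    intro i t; have := hB1 i t; simpa [Fin.sum_univ_two] using this
  have ha : ∀ i s, |qA i 0 s - qA i 1 s| ≤ 1 := by
    intro i s; rw [abs_le]
    constructor <;> linarith [hA0 i 0 s, hA0 i 1 s, hAsum i s]
  have hb : ∀ i t, |qB i 0 t - qB i 1 t| ≤ 1 := by
    intro i t; rw [abs_le]
    constructor <;> linarith [hB0 i 0 t, hB0 i 1 t, hBsum i t]
  have hcorr : ∀ s t, corr L s t
      = ∑ i, p i * ((qA i 0 s - qA i 1 s) * (qB i 0 t - qB i 1 t)) := by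
    intro s t
    rw [corr_expand, hrep, hrep, hrep, hrep, ← Finset.sum_sub_distrib,
      ← Finset.sum_sub_distrib, ← Finset.sum_add_distrib]
    exact Finset.sum_congr rfl fun i _ => by ring
  have key : CHSHk σ L = ∑ i, p i *
      (σ 0 0 * ((qA i 0 0 - qA i 1 0) * (qB i 0 0 - qB i 1 0))
       + σ 0 1 * ((qA i 0 0 - qA i 1 0) * (qB i 0 1 - qB i 1 1))
       + σ 1 0 * ((qA i 0 1 - qA i 1 1) * (qB i 0 0 - qB i 1 0))
       + σ 1 1 * ((qA i 0 1 - qA i 1 1) * (qB i 0 1 - qB i 1 1))) := by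
    rw [chshk_expand, hcorr, hcorr, hcorr, hcorr, Finset.mul_sum, Finset.mul_sum,
      Finset.mul_sum, Finset.mul_sum, ← Finset.sum_add_distrib, ← Finset.sum_add_distrib,
      ← Finset.sum_add_distrib]
    exact Finset.sum_congr rfl fun i _ => by ring
  rw [key]
  calc ∑ i, p i * (σ 0 0 * ((qA i 0 0 - qA i 1 0) * (qB i 0 0 - qB i 1 0))
       + σ 0 1 * ((qA i 0 0 - qA i 1 0) * (qB i 0 1 - qB i 1 1))
       + σ 1 0 * ((qA i 0 1 - qA i 1 1) * (qB i 0 0 - qB i 1 0))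
       + σ 1 1 * ((qA i 0 1 - qA i 1 1) * (qB i 0 1 - qB i 1 1)))
      ≤ ∑ i, p i * 2 := by
        apply Finset.sum_le_sum
        intro i _
        apply mul_le_mul_of_nonneg_left _ (hp i)
        exact pattern_bound σ hσ.1 hσ.2 _ _ _ _ (ha i 0) (ha i 1) (hb i 0) (hb i 1)
    _ = 2 := by rw [← Finset.sum_mul, hp1, one_mul]

end S9

namespace S9

def resid (R : Box) (σ : Fin 2 → Fin 2 → ℝ) (lam : ℝ) : Box :=
  fun x y s t => (R x y s t - lam * PR σ x y s t)/(1 - lam)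

lemma main_bound (R : Box) (σ σ'' : Fin 2 → Fin 2 → ℝ) (τ : Op) (hR : IsBox R)
    (hσ : IsSignPattern σ) (hσ'' : IsSignPattern σ'') (h2 : 2 ≤ CHSHk σ R)
    (hτ : IsLOSR τ) : CHSHk σ'' (applyOp τ R) ≤ CHSHk σ R := by
  have h4 : CHSHk σ R ≤ 4 := chshk_le_four σ R hσ hR.1 hR.2.1
  by_cases hv : CHSHk σ R = 4
  · have hb : CHSHk σ'' (applyOp τ R) ≤ 4 := chshk_le_four σ'' _ hσ''
      (applyOp_nonneg τ R hτ hR.1) (fun s t => applyOp_norm τ R hτ hR.2.1 s t)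
    linarith
  have hvlt : CHSHk σ R < 4 := lt_of_le_of_ne h4 hv
  set lam : ℝ := (CHSHk σ R - 2)/2 with hlam
  have hlam0 : 0 ≤ lam := by rw [hlam]; linarith
  have hlam1 : lam < 1 := by rw [hlam]; linarith
  have h1l : 0 < 1 - lam := by linarith
  have h1l' : (1:ℝ) - lam ≠ 0 := ne_of_gt h1l
  set Lb : Box := resid R σ lam with hLbdef
  have hrep : ∀ x y s t, R x y s t = lam * PR σ x y s t + (1 - lam) * Lb x y s t := by
    intro x y s t
    rw [hLbdef]
    simp only [resid]
    field_simp
    ring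
  -- Lb is nonnegative
  have hLb0 : ∀ x y s t, 0 ≤ Lb x y s t := by
    intro x y s t
    rw [hLbdef]
    simp only [resid]
    apply div_nonneg _ (le_of_lt h1l)
    have hcase : sgn x * sgn y * σ s t = 1 ∨ sgn x * sgn y * σ s t = -1 := by
      rcases sgn_cases x with hx | hx <;> rcases sgn_cases y with hy | hy <;>
        rcases hσ.1 s t with hst | hst <;> rw [hx, hy, hst] <;> norm_num
    rcases hcase with hc | hc
    · have helb := entry_lb R hR σ hσ x y s t hc
      have hPReq : PR σ x y s t = 1/2 := by
        simp only [PR, hc]; norm_num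
      rw [hPReq, hlam]
      linarith
    · have hPReq : PR σ x y s t = 0 := by
        simp only [PR, hc]; norm_num
      rw [hPReq]
      linarith [hR.1 x y s t]
  -- Lb is normalized
  have hLbn : ∀ s t, ∑ x, ∑ y, Lb x y s t = 1 := by
    intro s t
    have hRn : R 0 0 s t + R 0 1 s t + R 1 0 s t + R 1 1 s t = 1 := by
      have := hR.2.1 s t; simp [Fin.sum_univ_two] at this; linarith
    have hPRn : PR σ 0 0 s t + PR σ 0 1 s t + PR σ 1 0 s t + PR σ 1 1 s t = 1 := by
      simp [PR, sgn0, sgn1]; ring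
    rw [hLbdef]
    simp only [resid, Fin.sum_univ_two]
    rw [← add_div, ← add_div, ← add_div, div_eq_one_iff_eq h1l']
    linear_combination hRn - lam * hPRn
  -- Lb satisfies no-signalling
  have hPRA : ∀ x s t, PR σ x 0 s t + PR σ x 1 s t = 1/2 := by
    intro x s t
    rcases sgn_cases x with hx | hx <;> rcases hσ.1 s t with hst | hst <;>
      simp [PR, sgn0, sgn1, hx, hst] <;> ring
  have hPRB : ∀ y s t, PR σ 0 y s t + PR σ 1 y s t = 1/2 := by
    intro y s t
    rcases sgn_cases y with hy | hy <;> rcases hσ.1 s t with hst | hst <;>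
      simp [PR, sgn0, sgn1, hy, hst] <;> ring
  have hLbA : ∀ x s t t', ∑ y, Lb x y s t = ∑ y, Lb x y s t' := by
    intro x s t t'
    have hAx : R x 0 s t + R x 1 s t = R x 0 s t' + R x 1 s t' := by
      have := hR.2.2.1 x s t t'; simpa [Fin.sum_univ_two] using this
    rw [hLbdef]
    simp only [resid, Fin.sum_univ_two]
    rw [← add_div, ← add_div]
    congr 1
    linear_combination hAx - lam * hPRA x s t + lam * hPRA x s t'
  have hLbB : ∀ y t s s', ∑ x, Lb x y s t = ∑ x, Lb x y s' t := by
    intro y t s s'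
    have hBy : R 0 y s t + R 1 y s t = R 0 y s' t + R 1 y s' t := by
      have := hR.2.2.2 y t s s'; simpa [Fin.sum_univ_two] using this
    rw [hLbdef]
    simp only [resid, Fin.sum_univ_two]
    rw [← add_div, ← add_div]
    congr 1
    linear_combination hBy - lam * hPRB y s t + lam * hPRB y s' t
  -- all CHSH functionals of Lb are ≤ 2
  have hLbC : ∀ σ', IsSignPattern σ' → CHSHk σ' Lb ≤ 2 := by
    intro σ' hσ'
    have hcomb := chshk_comb σ' (PR σ) Lb lam (1-lam) R hrep
    have htrans := pattern_transfer R hR σ σ' hσ hσ' h2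
    rw [← hlam] at htrans
    have hXle : (1 - lam) * CHSHk σ' Lb ≤ (1 - lam) * 2 := by linarith
    exact le_of_mul_le_mul_left hXle h1l
  have hLbFree : IsFree Lb := fine Lb ⟨hLb0, hLbn, hLbA, hLbB⟩ hLbC
  -- conclusion
  have hRfun : R = fun x y s t => lam * PR σ x y s t + (1 - lam) * Lb x y s t := by
    funext x y s t; exact hrep x y s t
  have happ : ∀ x' y' s' t', applyOp τ R x' y' s' t'
      = lam * applyOp τ (PR σ) x' y' s' t' + (1-lam) * applyOp τ Lb x' y' s' t' := by
    intro x' y' s' t'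
    conv_lhs => rw [hRfun]
    exact applyOp_comb τ (PR σ) Lb lam (1-lam) x' y' s' t'
  have hfinal := chshk_comb σ'' (applyOp τ (PR σ)) (applyOp τ Lb) lam (1-lam)
    (applyOp τ R) happ
  have hPRbound : CHSHk σ'' (applyOp τ (PR σ)) ≤ 4 := chshk_le_four _ _ hσ''
    (applyOp_nonneg τ _ hτ (PR_nonneg σ hσ)) (fun s t => applyOp_norm τ _ hτ (PR_norm σ) s t)
  have hLbound : CHSHk σ'' (applyOp τ Lb) ≤ 2 :=
    free_chshk_le_two _ σ'' hσ'' (losr_free τ Lb hτ hLbFree)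
  rw [hfinal]
  nlinarith [mul_le_mul_of_nonneg_left hPRbound hlam0,
    mul_le_mul_of_nonneg_left hLbound (le_of_lt h1l)]

end S9

namespace S9

set_option maxHeartbeats 1000000 in
lemma relabel (R : Box) (fA fB : Fin 2 → Fin 2) :
    Conv R (fun x' y' s' t' => R (x' + fA s') (y' + fB t') s' t') := by
  refine ⟨fun x' y' s t x y s' t' => (if s = s' ∧ x' = x + fA s' then (1:ℝ) else 0)
      * (if t = t' ∧ y' = y + fB t' then 1 else 0), ⟨1, fun _ => 1,
    fun _ x' s x s' => if s = s' ∧ x' = x + fA s' then 1 else 0,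
    fun _ y' t y t' => if t = t' ∧ y' = y + fB t' then 1 else 0,
    fun _ => by norm_num, by simp, ?_, ?_, ?_, ?_, ?_, ?_, ?_⟩, ?_⟩
  · intro i x' s x s'; dsimp only; split_ifs <;> norm_num
  · intro i x s'
    rcases fin2 s' with h | h <;> subst h <;>
      [rcases fin2 (x + fA 0) with h | h; rcases fin2 (x + fA 1) with h | h] <;>
      simp [Fin.sum_univ_two, h] <;> decide
  · intro i y' t y t'; dsimp only; split_ifs <;> norm_num
  · intro i y t'
    rcases fin2 t' with h | h <;> subst h <;>
      [rcases fin2 (y + fB 0) with h | h; rcases fin2 (y + fB 1) with h | h] <;>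
      simp [Fin.sum_univ_two, h] <;> decide
  · intro i x₁ x₂ s s'
    rcases fin2 s' with h | h <;> subst h <;>
      [(rcases fin2 (x₁ + fA 0) with h1 | h1 <;> rcases fin2 (x₂ + fA 0) with h2 | h2);
       (rcases fin2 (x₁ + fA 1) with h1 | h1 <;> rcases fin2 (x₂ + fA 1) with h2 | h2)] <;>
      simp [Fin.sum_univ_two, h1, h2] <;>
      rcases fin2 s with hs | hs <;> subst hs <;> decide
  · intro i y₁ y₂ t t'
    rcases fin2 t' with h | h <;> subst h <;>
      [(rcases fin2 (y₁ + fB 0) with h1 | h1 <;> rcases fin2 (y₂ + fB 0) with h2 | h2);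
       (rcases fin2 (y₁ + fB 1) with h1 | h1 <;> rcases fin2 (y₂ + fB 1) with h2 | h2)] <;>
      simp [Fin.sum_univ_two, h1, h2] <;>
      rcases fin2 t with ht | ht <;> subst ht <;> decide
  · intro x' y' s t x y s' t'
    simp [Fin.sum_univ_one]
  · funext x' y' s' t'
    simp only [applyOp, Fin.sum_univ_two]
    rcases fin2 s' with h | h <;> subst h <;> rcases fin2 t' with h | h <;> subst h <;>
      [(rcases fin2 (fA 0) with h1 | h1 <;> rcases fin2 (fB 0) with h2 | h2);
       (rcases fin2 (fA 0) with h1 | h1 <;> rcases fin2 (fB 1) with h2 | h2);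
       (rcases fin2 (fA 1) with h1 | h1 <;> rcases fin2 (fB 0) with h2 | h2);
       (rcases fin2 (fA 1) with h1 | h1 <;> rcases fin2 (fB 1) with h2 | h2)] <;>
      rcases fin2 x' with hx | hx <;> subst hx <;>
      rcases fin2 y' with hy | hy <;> subst hy <;>
      simp [h1, h2]

end S9

namespace S9

set_option maxHeartbeats 1000000 in
lemma chshk_mem (R : Box) (σ : Fin 2 → Fin 2 → ℝ) (hσ : IsSignPattern σ) :
    ∃ R', Conv R R' ∧ CHSH R' = CHSHk σ R := by
  rcases hσ.1 0 0 with h00 | h00 <;> rcases hσ.1 0 1 with h01 | h01 <;>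
    rcases hσ.1 1 0 with h10 | h10 <;> rcases hσ.1 1 1 with h11 | h11
  · exact absurd hσ.2 (by rw [h00, h01, h10, h11]; norm_num)
  · refine ⟨_, relabel R (fun s => if s = 0 then 0 else 0)
      (fun t => if t = 0 then 0 else 0), ?_⟩
    simp only [CHSH, chshk_expand, corr_expand, h00, h01, h10, h11,
      show (0:Fin 2) + 0 = 0 from rfl, show (0:Fin 2) + 1 = 1 from rfl,
      show (1:Fin 2) + 0 = 1 from rfl, show (1:Fin 2) + 1 = 0 from rfl]
    norm_num [show (0:Fin 2) + 0 = 0 from rfl, show (0:Fin 2) + 1 = 1 from rfl,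
      show (1:Fin 2) + 0 = 1 from rfl, show (1:Fin 2) + 1 = 0 from rfl]
    try ring
  · refine ⟨_, relabel R (fun s => if s = 0 then 0 else 1)
      (fun t => if t = 0 then 0 else 0), ?_⟩
    simp only [CHSH, chshk_expand, corr_expand, h00, h01, h10, h11,
      show (0:Fin 2) + 0 = 0 from rfl, show (0:Fin 2) + 1 = 1 from rfl,
      show (1:Fin 2) + 0 = 1 from rfl, show (1:Fin 2) + 1 = 0 from rfl]
    norm_num [show (0:Fin 2) + 0 = 0 from rfl, show (0:Fin 2) + 1 = 1 from rfl,
      show (1:Fin 2) + 0 = 1 from rfl, show (1:Fin 2) + 1 = 0 from rfl]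
    try ring
  · exact absurd hσ.2 (by rw [h00, h01, h10, h11]; norm_num)
  · refine ⟨_, relabel R (fun s => if s = 0 then 0 else 0)
      (fun t => if t = 0 then 0 else 1), ?_⟩
    simp only [CHSH, chshk_expand, corr_expand, h00, h01, h10, h11,
      show (0:Fin 2) + 0 = 0 from rfl, show (0:Fin 2) + 1 = 1 from rfl,
      show (1:Fin 2) + 0 = 1 from rfl, show (1:Fin 2) + 1 = 0 from rfl]
    norm_num [show (0:Fin 2) + 0 = 0 from rfl, show (0:Fin 2) + 1 = 1 from rfl,
      show (1:Fin 2) + 0 = 1 from rfl, show (1:Fin 2) + 1 = 0 from rfl]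
    try ring
  · exact absurd hσ.2 (by rw [h00, h01, h10, h11]; norm_num)
  · exact absurd hσ.2 (by rw [h00, h01, h10, h11]; norm_num)
  · refine ⟨_, relabel R (fun s => if s = 0 then 0 else 1)
      (fun t => if t = 0 then 0 else 1), ?_⟩
    simp only [CHSH, chshk_expand, corr_expand, h00, h01, h10, h11,
      show (0:Fin 2) + 0 = 0 from rfl, show (0:Fin 2) + 1 = 1 from rfl,
      show (1:Fin 2) + 0 = 1 from rfl, show (1:Fin 2) + 1 = 0 from rfl]
    norm_num [show (0:Fin 2) + 0 = 0 from rfl, show (0:Fin 2) + 1 = 1 from rfl,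
      show (1:Fin 2) + 0 = 1 from rfl, show (1:Fin 2) + 1 = 0 from rfl]
    try ring
  · refine ⟨_, relabel R (fun s => if s = 0 then 1 else 0)
      (fun t => if t = 0 then 0 else 1), ?_⟩
    simp only [CHSH, chshk_expand, corr_expand, h00, h01, h10, h11,
      show (0:Fin 2) + 0 = 0 from rfl, show (0:Fin 2) + 1 = 1 from rfl,
      show (1:Fin 2) + 0 = 1 from rfl, show (1:Fin 2) + 1 = 0 from rfl]
    norm_num [show (0:Fin 2) + 0 = 0 from rfl, show (0:Fin 2) + 1 = 1 from rfl,
      show (1:Fin 2) + 0 = 1 from rfl, show (1:Fin 2) + 1 = 0 from rfl]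
    try ring
  · exact absurd hσ.2 (by rw [h00, h01, h10, h11]; norm_num)
  · exact absurd hσ.2 (by rw [h00, h01, h10, h11]; norm_num)
  · refine ⟨_, relabel R (fun s => if s = 0 then 1 else 1)
      (fun t => if t = 0 then 0 else 1), ?_⟩
    simp only [CHSH, chshk_expand, corr_expand, h00, h01, h10, h11,
      show (0:Fin 2) + 0 = 0 from rfl, show (0:Fin 2) + 1 = 1 from rfl,
      show (1:Fin 2) + 0 = 1 from rfl, show (1:Fin 2) + 1 = 0 from rfl]
    norm_num [show (0:Fin 2) + 0 = 0 from rfl, show (0:Fin 2) + 1 = 1 from rfl,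
      show (1:Fin 2) + 0 = 1 from rfl, show (1:Fin 2) + 1 = 0 from rfl]
    try ring
  · exact absurd hσ.2 (by rw [h00, h01, h10, h11]; norm_num)
  · refine ⟨_, relabel R (fun s => if s = 0 then 1 else 0)
      (fun t => if t = 0 then 0 else 0), ?_⟩
    simp only [CHSH, chshk_expand, corr_expand, h00, h01, h10, h11,
      show (0:Fin 2) + 0 = 0 from rfl, show (0:Fin 2) + 1 = 1 from rfl,
      show (1:Fin 2) + 0 = 1 from rfl, show (1:Fin 2) + 1 = 0 from rfl]
    norm_num [show (0:Fin 2) + 0 = 0 from rfl, show (0:Fin 2) + 1 = 1 from rfl,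
      show (1:Fin 2) + 0 = 1 from rfl, show (1:Fin 2) + 1 = 0 from rfl]
    try ring
  · refine ⟨_, relabel R (fun s => if s = 0 then 1 else 1)
      (fun t => if t = 0 then 0 else 0), ?_⟩
    simp only [CHSH, chshk_expand, corr_expand, h00, h01, h10, h11,
      show (0:Fin 2) + 0 = 0 from rfl, show (0:Fin 2) + 1 = 1 from rfl,
      show (1:Fin 2) + 0 = 1 from rfl, show (1:Fin 2) + 1 = 0 from rfl]
    norm_num [show (0:Fin 2) + 0 = 0 from rfl, show (0:Fin 2) + 1 = 1 from rfl,
      show (1:Fin 2) + 0 = 1 from rfl, show (1:Fin 2) + 1 = 0 from rfl]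
    try ring
  · exact absurd hσ.2 (by rw [h00, h01, h10, h11]; norm_num)

lemma two_mem (R : Box) (hR : IsBox R) :
    ∃ R', Conv R R' ∧ CHSH R' = 2 := by
  have e00 : R 0 0 0 0 + R 0 1 0 0 + R 1 0 0 0 + R 1 1 0 0 = 1 := by
    have := hR.2.1 0 0; simp [Fin.sum_univ_two] at this; linarith
  refine ⟨fun x' y' _ _ => (if x' = 0 then (1:ℝ) else 0) * (if y' = 0 then 1 else 0),
    ⟨fun x' y' s t x y s' t' => (if s = 0 ∧ x' = 0 then (1:ℝ) else 0)
      * (if t = 0 ∧ y' = 0 then 1 else 0), ⟨1, fun _ => 1,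
    fun _ x' s x s' => if s = 0 ∧ x' = 0 then 1 else 0,
    fun _ y' t y t' => if t = 0 ∧ y' = 0 then 1 else 0,
    fun _ => by norm_num, by simp,
    (by intro i x' s x s'; dsimp only; split_ifs <;> norm_num),
    (by intro i x s'; simp [Fin.sum_univ_two]; decide),
    (by intro i y' t y t'; dsimp only; split_ifs <;> norm_num),
    (by intro i y t'; simp [Fin.sum_univ_two]; decide),
    (by intro i x₁ x₂ s s'; rfl),
    (by intro i y₁ y₂ t t'; rfl),
    (by intro x' y' s t x y s' t'; simp [Fin.sum_univ_one])⟩, ?_⟩, ?_⟩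
  · funext x' y' s' t'
    simp only [applyOp, Fin.sum_univ_two]
    rcases fin2 x' with hx | hx <;> subst hx <;>
      rcases fin2 y' with hy | hy <;> subst hy <;> norm_num <;> linarith
  · simp only [CHSH, corr_expand]
    norm_num

end S9

namespace S9

lemma std_pattern : IsSignPattern (pat 1 1 1 (-1)) :=
  pat_sign _ _ _ _ (by norm_num) (by norm_num) (by norm_num) (by norm_num) (by norm_num)

lemma chsh_eq (B : Box) : CHSH B = CHSHk (pat 1 1 1 (-1)) B := by
  rw [chshk_expand]
  simp only [CHSH, pat]
  norm_num
  ring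

end S9

/-- Closed form for `M_CHSH`: it equals 2 on free boxes and equals the uniquely violated
CHSH functional on nonfree boxes; equivalently, LOSR operations cannot increase a
violated CHSH functional. -/
theorem stmt_9 :
    (∀ R : Box, IsBox R → IsFree R → MCHSH R = 2) ∧
    (∀ (R : Box) (σ : Fin 2 → Fin 2 → ℝ), IsBox R → IsSignPattern σ →
      2 < CHSHk σ R → MCHSH R = CHSHk σ R) ∧
    (∀ (R : Box) (σ : Fin 2 → Fin 2 → ℝ) (τ : Op), IsBox R → IsSignPattern σ →
      2 < CHSHk σ R → IsLOSR τ → CHSHk σ (applyOp τ R) ≤ CHSHk σ R) := by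
  refine ⟨?_, ?_, ?_⟩
  · intro R hR hF
    have hgr : IsGreatest {c : ℝ | ∃ R', Conv R R' ∧ c = CHSH R'} 2 := by
      constructor
      · obtain ⟨R', hconv, hch⟩ := S9.two_mem R hR
        exact ⟨R', hconv, hch.symm⟩
      · rintro c ⟨R', ⟨τ, hτ, happ⟩, rfl⟩
        have hfree : IsFree R' := by rw [← happ]; exact S9.losr_free τ R hτ hF
        rw [S9.chsh_eq]
        exact S9.free_chshk_le_two R' _ S9.std_pattern hfree
    exact hgr.csSup_eq
  · intro R σ hR hσ hgt
    have hgr : IsGreatest {c : ℝ | ∃ R', Conv R R' ∧ c = CHSH R'} (CHSHk σ R) := by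
      constructor
      · obtain ⟨R', hconv, hch⟩ := S9.chshk_mem R σ hσ
        exact ⟨R', hconv, hch.symm⟩
      · rintro c ⟨R', ⟨τ, hτ, happ⟩, rfl⟩
        rw [S9.chsh_eq, ← happ]
        exact S9.main_bound R σ _ τ hR hσ S9.std_pattern (le_of_lt hgt) hτ
    exact hgr.csSup_eq
  · intro R σ τ hR hσ hgt hτ
    exact S9.main_bound R σ σ τ hR hσ hσ (le_of_lt hgt) hτ

end
end

section
/- Every locally deterministic type-preserving operation on CHSH-type boxes that is not a local symmetry operation maps every no-signalling box to a free (local) box. Consequently, a nonfree CHSH-type box has no preimage among CHSH-type boxes under any deterministic nonsymmetry operation. -/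
open Finset

noncomputable section

/-- The action of a type-preserving locally deterministic operation
`(f_A, g_A, f_B, g_B)` on a CHSH-type box. -/
def applyDet (fA fB : Fin 2 → Fin 2) (gA gB : Fin 2 → Fin 2 → Fin 2) (R : Box) : Box :=
  fun x' y' s' t' => ∑ x, ∑ y,
    (if gA x s' = x' then 1 else 0) * (if gB y t' = y' then 1 else 0) *
      R x y (fA s') (fB t')

lemma const_of_not_bij {f : Fin 2 → Fin 2} (h : ¬ Function.Bijective f) : f 1 = f 0 := by
  rw [← Finite.injective_iff_bijective, Function.not_injective_iff] at h
  obtain ⟨a, b, hfab, hab⟩ := h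
  fin_cases a <;> fin_cases b <;> simp_all

lemma freeA (Q : Box) (p : Fin 2 → ℝ) (α : Fin 2 → Fin 2 → Fin 2)
    (B : Fin 2 → Fin 2 → Fin 2 → ℝ)
    (hp : ∀ l, 0 ≤ p l) (hps : ∑ l, p l = 1)
    (hB : ∀ l y t, 0 ≤ B l y t) (hBs : ∀ l t, ∑ y, B l y t = p l)
    (hQ : ∀ x y s t, Q x y s t = ∑ l, (if α l s = x then 1 else 0) * B l y t) :
    IsFree Q := by
  refine ⟨2, p, (fun l x s => if α l s = x then 1 else 0),
    (fun l y t => if p l = 0 then (if y = 0 then 1 else 0) else B l y t / p l),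
    hp, hps, ?_, ?_, ?_, ?_, ?_⟩
  · intro l x s; dsimp only; split <;> norm_num
  · intro l s; simp [Finset.sum_ite_eq]
  · intro l y t
    dsimp only
    split
    · split <;> norm_num
    · exact div_nonneg (hB l y t) (hp l)
  · intro l t
    dsimp only
    by_cases h : p l = 0
    · simp [h, Fin.sum_univ_two]
    · simp only [if_neg h]
      rw [← Finset.sum_div, hBs, div_self h]
  · intro x y s t
    dsimp only
    rw [hQ x y s t]
    refine Finset.sum_congr rfl fun l _ => ?_
    by_cases h : p l = 0
    · have hB0 : B l y t = 0 := by
        have := hBs l t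
        rw [h] at this
        have h2 := (Finset.sum_eq_zero_iff_of_nonneg (fun y _ => hB l y t)).1 this
        exact h2 y (mem_univ y)
      simp [h, hB0]
    · simp only [if_neg h]
      field_simp

lemma freeB (Q : Box) (p : Fin 2 → ℝ) (β : Fin 2 → Fin 2 → Fin 2)
    (A : Fin 2 → Fin 2 → Fin 2 → ℝ)
    (hp : ∀ l, 0 ≤ p l) (hps : ∑ l, p l = 1)
    (hA : ∀ l x s, 0 ≤ A l x s) (hAs : ∀ l s, ∑ x, A l x s = p l)
    (hQ : ∀ x y s t, Q x y s t = ∑ l, A l x s * (if β l t = y then 1 else 0)) :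
    IsFree Q := by
  refine ⟨2, p, (fun l x s => if p l = 0 then (if x = 0 then 1 else 0) else A l x s / p l),
    (fun l y t => if β l t = y then 1 else 0),
    hp, hps, ?_, ?_, ?_, ?_, ?_⟩
  · intro l x s
    dsimp only
    split
    · split <;> norm_num
    · exact div_nonneg (hA l x s) (hp l)
  · intro l s
    dsimp only
    by_cases h : p l = 0
    · simp [h, Fin.sum_univ_two]
    · simp only [if_neg h]
      rw [← Finset.sum_div, hAs, div_self h]
  · intro l y t; dsimp only; split <;> norm_num
  · intro l t; simp [Finset.sum_ite_eq]
  · intro x y s t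
    dsimp only
    rw [hQ x y s t]
    refine Finset.sum_congr rfl fun l _ => ?_
    by_cases h : p l = 0
    · have hA0 : A l x s = 0 := by
        have := hAs l s
        rw [h] at this
        exact (Finset.sum_eq_zero_iff_of_nonneg (fun x _ => hA l x s)).1 this x (mem_univ x)
      simp [h, hA0]
    · simp only [if_neg h]
      field_simp

lemma caseFA (fA fB : Fin 2 → Fin 2) (gA gB : Fin 2 → Fin 2 → Fin 2) (R : Box)
    (hR : IsBox R) (h : fA 1 = fA 0) :
    IsFree (applyDet fA fB gA gB R) := by
  obtain ⟨hpos, hnorm, hnsA, hnsB⟩ := hR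
  have hfA : ∀ s, fA s = fA 0 := by intro s; fin_cases s <;> simp [h]
  refine freeA (applyDet fA fB gA gB R)
    (fun l => ∑ b, R l b (fA 0) 0)
    gA
    (fun l y t => ∑ b, (if gB b t = y then 1 else 0) * R l b (fA 0) (fB t))
    (fun l => Finset.sum_nonneg fun b _ => hpos _ _ _ _)
    (hnorm (fA 0) 0)
    (fun l y t => Finset.sum_nonneg fun b _ =>
      mul_nonneg (by split <;> norm_num) (hpos _ _ _ _))
    ?_ ?_
  · intro l t
    rw [Finset.sum_comm]
    calc ∑ b, ∑ y, (if gB b t = y then 1 else 0) * R l b (fA 0) (fB t)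
        = ∑ b, R l b (fA 0) (fB t) := by
          refine Finset.sum_congr rfl fun b _ => ?_
          rw [← Finset.sum_mul]
          simp [Finset.sum_ite_eq]
      _ = ∑ b, R l b (fA 0) 0 := hnsA l (fA 0) (fB t) 0
  · intro x y s t
    simp only [applyDet]
    rw [hfA s]
    refine Finset.sum_congr rfl fun a _ => ?_
    rw [Finset.mul_sum]
    exact Finset.sum_congr rfl fun b _ => mul_assoc _ _ _

lemma caseFB (fA fB : Fin 2 → Fin 2) (gA gB : Fin 2 → Fin 2 → Fin 2) (R : Box)
    (hR : IsBox R) (h : fB 1 = fB 0) :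
    IsFree (applyDet fA fB gA gB R) := by
  obtain ⟨hpos, hnorm, hnsA, hnsB⟩ := hR
  have hfB : ∀ t, fB t = fB 0 := by intro t; fin_cases t <;> simp [h]
  refine freeB (applyDet fA fB gA gB R)
    (fun l => ∑ a, R a l 0 (fB 0))
    gB
    (fun l x s => ∑ a, (if gA a s = x then 1 else 0) * R a l (fA s) (fB 0))
    (fun l => Finset.sum_nonneg fun a _ => hpos _ _ _ _)
    ?_
    (fun l x s => Finset.sum_nonneg fun a _ =>
      mul_nonneg (by split <;> norm_num) (hpos _ _ _ _))
    ?_ ?_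
  · -- ∑ l, ∑ a, R a l 0 (fB 0) = 1
    rw [Finset.sum_comm]
    exact hnorm 0 (fB 0)
  · intro l s
    rw [Finset.sum_comm]
    calc ∑ a, ∑ x, (if gA a s = x then 1 else 0) * R a l (fA s) (fB 0)
        = ∑ a, R a l (fA s) (fB 0) := by
          refine Finset.sum_congr rfl fun a _ => ?_
          rw [← Finset.sum_mul]
          simp [Finset.sum_ite_eq]
      _ = ∑ a, R a l 0 (fB 0) := hnsB l (fB 0) (fA s) 0
  · intro x y s t
    simp only [applyDet]
    rw [hfB t]
    rw [Finset.sum_comm]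
    refine Finset.sum_congr rfl fun b _ => ?_
    -- ∑ a, iA * iB * R a b (fA s) (fB 0) = (∑ a, iA * R a b (fA s)(fB 0)) * iB
    rw [Finset.sum_mul]
    exact Finset.sum_congr rfl fun a _ => by ring

lemma fin2_or (a b : Fin 2) : b = a ∨ b = a + 1 := by fin_cases a <;> fin_cases b <;> simp

lemma fin2_succ_ne (a : Fin 2) : a + 1 ≠ a := by fin_cases a <;> simp

lemma sum_ind_mul (c : Fin 2) (f : Fin 2 → ℝ) :
    ∑ l, (if c = l then (1:ℝ) else 0) * f l = f c := by
  simp [ite_mul, Finset.sum_ite_eq]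

lemma sum_mul_ind (c : Fin 2) (f : Fin 2 → ℝ) :
    ∑ l, (if (l : Fin 2) = c then (1:ℝ) else 0) * f l = f c := by
  simp [ite_mul, Finset.sum_ite_eq']

lemma sum_ind (c : Fin 2) : ∑ l, (if c = l then (1:ℝ) else 0) = 1 := by
  simp [Finset.sum_ite_eq]

lemma caseGA (fA fB : Fin 2 → Fin 2) (gA gB : Fin 2 → Fin 2 → Fin 2) (R : Box)
    (hR : IsBox R) (s₀ : Fin 2) (h : gA 1 s₀ = gA 0 s₀) :
    IsFree (applyDet fA fB gA gB R) := by
  obtain ⟨hpos, hnorm, hnsA, hnsB⟩ := hR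
  have hgA : ∀ a, gA a s₀ = gA 0 s₀ := by intro a; fin_cases a <;> simp [h]
  refine freeA (applyDet fA fB gA gB R)
    (fun l => ∑ a, (if gA a (s₀+1) = l then 1 else 0) * ∑ b, R a b (fA (s₀+1)) 0)
    (fun l s => if s = s₀ then gA 0 s₀ else l)
    (fun l y t => ∑ a, ∑ b, (if gA a (s₀+1) = l then 1 else 0) *
      (if gB b t = y then 1 else 0) * R a b (fA (s₀+1)) (fB t))
    (fun l => Finset.sum_nonneg fun a _ => mul_nonneg (by split <;> norm_num)
      (Finset.sum_nonneg fun b _ => hpos _ _ _ _))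
    ?_
    (fun l y t => Finset.sum_nonneg fun a _ => Finset.sum_nonneg fun b _ =>
      mul_nonneg (mul_nonneg (by split <;> norm_num) (by split <;> norm_num)) (hpos _ _ _ _))
    ?_ ?_
  · -- ∑ l, p l = 1
    rw [Finset.sum_comm]
    calc ∑ a, ∑ l, (if gA a (s₀+1) = l then 1 else 0) * ∑ b, R a b (fA (s₀+1)) 0
        = ∑ a, ∑ b, R a b (fA (s₀+1)) 0 :=
          Finset.sum_congr rfl fun a _ => sum_ind_mul _ _
      _ = 1 := hnorm _ _
  · -- ∑ y, B l y t = p l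
    intro l t
    rw [Finset.sum_comm]
    refine Finset.sum_congr rfl fun a _ => ?_
    calc ∑ y, ∑ b, (if gA a (s₀+1) = l then (1:ℝ) else 0) * (if gB b t = y then 1 else 0)
          * R a b (fA (s₀+1)) (fB t)
        = ∑ b, (if gA a (s₀+1) = l then (1:ℝ) else 0) * R a b (fA (s₀+1)) (fB t) := by
          rw [Finset.sum_comm]
          refine Finset.sum_congr rfl fun b _ => ?_
          calc ∑ y, (if gA a (s₀+1) = l then (1:ℝ) else 0) * (if gB b t = y then 1 else 0)
                * R a b (fA (s₀+1)) (fB t)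
              = (∑ y, (if gB b t = y then (1:ℝ) else 0)) *
                  ((if gA a (s₀+1) = l then (1:ℝ) else 0) * R a b (fA (s₀+1)) (fB t)) := by
                rw [Finset.sum_mul]
                exact Finset.sum_congr rfl fun y _ => by ring
            _ = _ := by rw [sum_ind, one_mul]
      _ = (if gA a (s₀+1) = l then (1:ℝ) else 0) * ∑ b, R a b (fA (s₀+1)) (fB t) := by
          rw [Finset.mul_sum]
      _ = (if gA a (s₀+1) = l then (1:ℝ) else 0) * ∑ b, R a b (fA (s₀+1)) 0 := by
          rw [hnsA a (fA (s₀+1)) (fB t) 0]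
  · -- hQ
    intro x y s t
    rcases fin2_or s₀ s with h1 | h1
    · -- s = s₀
      rw [h1]
      simp only [if_pos rfl, eq_self_iff_true, if_true, applyDet]
      simp_rw [hgA]
      rw [← Finset.mul_sum]
      calc ∑ a, ∑ b, (if gA 0 s₀ = x then (1:ℝ) else 0) * (if gB b t = y then 1 else 0)
            * R a b (fA s₀) (fB t)
          = (if gA 0 s₀ = x then (1:ℝ) else 0) *
              ∑ a, ∑ b, (if gB b t = y then 1 else 0) * R a b (fA s₀) (fB t) := by
            rw [Finset.mul_sum]
            refine Finset.sum_congr rfl fun a _ => ?_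
            rw [Finset.mul_sum]
            exact Finset.sum_congr rfl fun b _ => by ring
        _ = (if gA 0 s₀ = x then (1:ℝ) else 0) *
              ∑ b, (if gB b t = y then 1 else 0) * ∑ a, R a b (fA (s₀+1)) (fB t) := by
            rw [Finset.sum_comm]
            congr 1
            refine Finset.sum_congr rfl fun b _ => ?_
            rw [← Finset.mul_sum, hnsB b (fB t) (fA s₀) (fA (s₀+1))]
        _ = (if gA 0 s₀ = x then (1:ℝ) else 0) *
              ∑ l, ∑ a, ∑ b, (if gA a (s₀+1) = l then 1 else 0) *
                (if gB b t = y then 1 else 0) * R a b (fA (s₀+1)) (fB t) := by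
            congr 1
            rw [Finset.sum_comm]
            calc ∑ b, (if gB b t = y then (1:ℝ) else 0) * ∑ a, R a b (fA (s₀+1)) (fB t)
                = ∑ a, ∑ b, (if gB b t = y then (1:ℝ) else 0) * R a b (fA (s₀+1)) (fB t) := by
                  rw [Finset.sum_comm]
                  exact Finset.sum_congr rfl fun b _ => Finset.mul_sum _ _ _
              _ = ∑ a, ∑ l, ∑ b, (if gA a (s₀+1) = l then 1 else 0) *
                    (if gB b t = y then 1 else 0) * R a b (fA (s₀+1)) (fB t) := by
                  refine Finset.sum_congr rfl fun a _ => ?_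
                  rw [show (∑ b, (if gB b t = y then (1:ℝ) else 0) * R a b (fA (s₀+1)) (fB t))
                      = ∑ l, (if gA a (s₀+1) = l then (1:ℝ) else 0) *
                          ∑ b, (if gB b t = y then 1 else 0) * R a b (fA (s₀+1)) (fB t)
                      from (sum_ind_mul (gA a (s₀+1)) (fun _ =>
                        ∑ b, (if gB b t = y then (1:ℝ) else 0) * R a b (fA (s₀+1)) (fB t))).symm]
                  refine Finset.sum_congr rfl fun l _ => ?_
                  rw [Finset.mul_sum]
                  exact Finset.sum_congr rfl fun b _ => (mul_assoc _ _ _).symm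
              _ = _ := by rw [Finset.sum_comm]
    · -- s = s₀ + 1
      rw [h1]
      simp only [if_neg (fin2_succ_ne s₀), applyDet]
      exact (sum_mul_ind x (fun l => ∑ a, ∑ b, (if gA a (s₀+1) = l then (1:ℝ) else 0) *
        (if gB b t = y then 1 else 0) * R a b (fA (s₀+1)) (fB t))).symm

lemma sum_mul_ind' (c : Fin 2) (f : Fin 2 → ℝ) :
    ∑ l, f l * (if (l : Fin 2) = c then (1:ℝ) else 0) = f c := by
  simp [mul_ite, Finset.sum_ite_eq']

lemma caseGB (fA fB : Fin 2 → Fin 2) (gA gB : Fin 2 → Fin 2 → Fin 2) (R : Box)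
    (hR : IsBox R) (t₀ : Fin 2) (h : gB 1 t₀ = gB 0 t₀) :
    IsFree (applyDet fA fB gA gB R) := by
  obtain ⟨hpos, hnorm, hnsA, hnsB⟩ := hR
  have hgB : ∀ b, gB b t₀ = gB 0 t₀ := by intro b; fin_cases b <;> simp [h]
  refine freeB (applyDet fA fB gA gB R)
    (fun l => ∑ b, (if gB b (t₀+1) = l then 1 else 0) * ∑ a, R a b 0 (fB (t₀+1)))
    (fun l t => if t = t₀ then gB 0 t₀ else l)
    (fun l x s => ∑ a, ∑ b, (if gA a s = x then 1 else 0) *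
      (if gB b (t₀+1) = l then 1 else 0) * R a b (fA s) (fB (t₀+1)))
    (fun l => Finset.sum_nonneg fun b _ => mul_nonneg (by split <;> norm_num)
      (Finset.sum_nonneg fun a _ => hpos _ _ _ _))
    ?_
    (fun l x s => Finset.sum_nonneg fun a _ => Finset.sum_nonneg fun b _ =>
      mul_nonneg (mul_nonneg (by split <;> norm_num) (by split <;> norm_num)) (hpos _ _ _ _))
    ?_ ?_
  · -- ∑ l, p l = 1
    rw [Finset.sum_comm]
    calc ∑ b, ∑ l, (if gB b (t₀+1) = l then 1 else 0) * ∑ a, R a b 0 (fB (t₀+1))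
        = ∑ b, ∑ a, R a b 0 (fB (t₀+1)) :=
          Finset.sum_congr rfl fun b _ => sum_ind_mul _ _
      _ = ∑ a, ∑ b, R a b 0 (fB (t₀+1)) := by rw [Finset.sum_comm]
      _ = 1 := hnorm _ _
  · -- ∑ x, A l x s = p l
    intro l s
    calc ∑ x, ∑ a, ∑ b, (if gA a s = x then (1:ℝ) else 0) *
          (if gB b (t₀+1) = l then 1 else 0) * R a b (fA s) (fB (t₀+1))
        = ∑ a, ∑ b, (if gB b (t₀+1) = l then (1:ℝ) else 0) * R a b (fA s) (fB (t₀+1)) := by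
          rw [Finset.sum_comm]
          refine Finset.sum_congr rfl fun a _ => ?_
          rw [Finset.sum_comm]
          refine Finset.sum_congr rfl fun b _ => ?_
          calc ∑ x, (if gA a s = x then (1:ℝ) else 0) *
                (if gB b (t₀+1) = l then 1 else 0) * R a b (fA s) (fB (t₀+1))
              = (∑ x, (if gA a s = x then (1:ℝ) else 0)) *
                  ((if gB b (t₀+1) = l then (1:ℝ) else 0) * R a b (fA s) (fB (t₀+1))) := by
                rw [Finset.sum_mul]
                exact Finset.sum_congr rfl fun x _ => by ring
            _ = _ := by rw [sum_ind, one_mul]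
      _ = ∑ b, (if gB b (t₀+1) = l then (1:ℝ) else 0) * ∑ a, R a b (fA s) (fB (t₀+1)) := by
          rw [Finset.sum_comm]
          exact Finset.sum_congr rfl fun b _ => by rw [Finset.mul_sum]
      _ = ∑ b, (if gB b (t₀+1) = l then (1:ℝ) else 0) * ∑ a, R a b 0 (fB (t₀+1)) := by
          refine Finset.sum_congr rfl fun b _ => ?_
          rw [hnsB b (fB (t₀+1)) (fA s) 0]
  · -- hQ
    intro x y s t
    rcases fin2_or t₀ t with h1 | h1
    · -- t = t₀
      rw [h1]
      simp only [if_pos rfl, eq_self_iff_true, if_true, applyDet]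
      simp_rw [hgB]
      calc ∑ a, ∑ b, (if gA a s = x then (1:ℝ) else 0) * (if gB 0 t₀ = y then 1 else 0)
            * R a b (fA s) (fB t₀)
          = (∑ a, ∑ b, (if gA a s = x then (1:ℝ) else 0) * R a b (fA s) (fB t₀)) *
              (if gB 0 t₀ = y then (1:ℝ) else 0) := by
            rw [Finset.sum_mul]
            refine Finset.sum_congr rfl fun a _ => ?_
            rw [Finset.sum_mul]
            exact Finset.sum_congr rfl fun b _ => by ring
        _ = (∑ a, (if gA a s = x then (1:ℝ) else 0) * ∑ b, R a b (fA s) (fB (t₀+1))) *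
              (if gB 0 t₀ = y then (1:ℝ) else 0) := by
            congr 1
            refine Finset.sum_congr rfl fun a _ => ?_
            rw [← Finset.mul_sum, hnsA a (fA s) (fB t₀) (fB (t₀+1))]
        _ = (∑ l, ∑ a, ∑ b, (if gA a s = x then (1:ℝ) else 0) *
              (if gB b (t₀+1) = l then 1 else 0) * R a b (fA s) (fB (t₀+1))) *
              (if gB 0 t₀ = y then (1:ℝ) else 0) := by
            congr 1
            calc ∑ a, (if gA a s = x then (1:ℝ) else 0) * ∑ b, R a b (fA s) (fB (t₀+1))
                = ∑ a, ∑ b, (if gA a s = x then (1:ℝ) else 0) * R a b (fA s) (fB (t₀+1)) :=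
                  Finset.sum_congr rfl fun a _ => Finset.mul_sum _ _ _
              _ = ∑ a, ∑ l, ∑ b, (if gA a s = x then (1:ℝ) else 0) *
                    (if gB b (t₀+1) = l then 1 else 0) * R a b (fA s) (fB (t₀+1)) := by
                  refine Finset.sum_congr rfl fun a _ => ?_
                  symm
                  rw [Finset.sum_comm]
                  refine Finset.sum_congr rfl fun b _ => ?_
                  calc ∑ l, (if gA a s = x then (1:ℝ) else 0) *
                        (if gB b (t₀+1) = l then 1 else 0) * R a b (fA s) (fB (t₀+1))
                      = ∑ l, (if gB b (t₀+1) = l then (1:ℝ) else 0) *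
                          ((if gA a s = x then (1:ℝ) else 0) * R a b (fA s) (fB (t₀+1))) :=
                        Finset.sum_congr rfl fun l _ => by ring
                    _ = _ := sum_ind_mul (gB b (t₀+1)) (fun _ =>
                        (if gA a s = x then (1:ℝ) else 0) * R a b (fA s) (fB (t₀+1)))
              _ = _ := by rw [Finset.sum_comm]
        _ = _ := by rw [Finset.sum_mul]
    · -- t = t₀ + 1
      rw [h1]
      simp only [if_neg (fin2_succ_ne t₀), applyDet]
      exact (sum_mul_ind' y (fun l => ∑ a, ∑ b, (if gA a s = x then (1:ℝ) else 0) *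
        (if gB b (t₀+1) = l then 1 else 0) * R a b (fA s) (fB (t₀+1)))).symm

/-- Every type-preserving locally deterministic operation on CHSH-type boxes that is
not a local symmetry maps every no-signalling box to a free box; hence no nonfree
CHSH-type box has a preimage under such an operation. -/
theorem stmt_14 (fA fB : Fin 2 → Fin 2) (gA gB : Fin 2 → Fin 2 → Fin 2)
    (hnotsym : ¬ (Function.Bijective fA ∧ Function.Bijective fB ∧
      (∀ s, Function.Bijective (fun x => gA x s)) ∧
      (∀ t, Function.Bijective (fun y => gB y t)))) :
    (∀ R : Box, IsBox R → IsFree (applyDet fA fB gA gB R)) ∧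
    (∀ R : Box, IsBox R → ¬ IsFree R →
      ¬ ∃ R' : Box, IsBox R' ∧ applyDet fA fB gA gB R' = R) := by
  have key : ∀ R : Box, IsBox R → IsFree (applyDet fA fB gA gB R) := by
    by_cases hA : Function.Bijective fA
    · by_cases hB : Function.Bijective fB
      · by_cases hGA : ∀ s, Function.Bijective (fun x => gA x s)
        · by_cases hGB : ∀ t, Function.Bijective (fun y => gB y t)
          · exact absurd ⟨hA, hB, hGA, hGB⟩ hnotsym
          · push_neg at hGB
            obtain ⟨t₀, hgb⟩ := hGB
            exact fun R hR => caseGB fA fB gA gB R hR t₀ (const_of_not_bij hgb)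
        · push_neg at hGA
          obtain ⟨s₀, hga⟩ := hGA
          exact fun R hR => caseGA fA fB gA gB R hR s₀ (const_of_not_bij hga)
      · exact fun R hR => caseFB fA fB gA gB R hR (const_of_not_bij hB)
    · exact fun R hR => caseFA fA fB gA gB R hR (const_of_not_bij hA)
  refine ⟨key, ?_⟩
  rintro R hR hnf ⟨R', hR', rfl⟩
  exact hnf (key R' hR')

end
end
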